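/- arXiv:0803.2450 — 5 statements merged into one kernel-verified Lean document; each statement's English description precedes it below -/
import Mathlib

section
/- Let 0<α≤1 and set s_α = -3/4 if 0<α≤1/2 and s_α = -3/(5-2α) if 1/2<α≤1. Let s ≤ s_α. Then there exists δ₀>0 such that for every δ ∈ (0, δ₀) the bilinear estimate fails: for every constant C>0 there exist nonnegative functions F, G ∈ L²(ℝ²) such that ‖ |ξ| ⟨ξ⟩^s w(ξ,τ)^{-1/2+δ} ∬_{ℝ²} [F(ξ₁,τ₁) ⟨ξ₁⟩^{-s} w(ξ₁,τ₁)^{-1/2}] · [G(ξ-ξ₁, τ-τ₁) ⟨ξ-ξ₁⟩^{-s} w(ξ-ξ₁, τ-τ₁)^{-1/2}] dξ₁ dτ₁ ‖_{L²_{ξ,τ}(ℝ²)} > C ‖F‖_{L²(ℝ²)} ‖G‖_{L²(ℝ²)}. -/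
open MeasureTheory

/-- The Japanese bracket `⟨ξ⟩ = (1+ξ²)^{1/2}`. -/
noncomputable def jap (x : ℝ) : ℝ := Real.sqrt (1 + x ^ 2)

/-- The KdV–Burgers weight `w(ξ,τ) = (1 + (τ-ξ³)² + |ξ|^{4α})^{1/2}`. -/
noncomputable def kdvbWeight (α ξ τ : ℝ) : ℝ :=
  Real.sqrt (1 + (τ - ξ ^ 3) ^ 2 + |ξ| ^ (4 * α))


open Set ENNReal
set_option maxHeartbeats 2000000

section aux

lemma one_le_jap (x : ℝ) : 1 ≤ jap x := by
  have h := Real.sqrt_le_sqrt (show (1:ℝ) ≤ 1 + x^2 by nlinarith)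
  rwa [Real.sqrt_one] at h

lemma jap_pos (x : ℝ) : 0 < jap x := lt_of_lt_of_le one_pos (one_le_jap x)

lemma abs_le_jap (x : ℝ) : |x| ≤ jap x := by
  rw [jap, show |x| = Real.sqrt (x^2) by rw [Real.sqrt_sq_eq_abs]]
  exact Real.sqrt_le_sqrt (by nlinarith)

lemma jap_le (x : ℝ) : jap x ≤ 1 + |x| := by
  rw [jap]
  have h : (1 + x^2) ≤ (1+|x|)^2 := by nlinarith [abs_nonneg x, sq_abs x]
  calc Real.sqrt (1+x^2) ≤ Real.sqrt ((1+|x|)^2) := Real.sqrt_le_sqrt h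
    _ = 1 + |x| := Real.sqrt_sq (by positivity)

lemma measurable_jap : Measurable jap :=
  (continuous_const.add (continuous_pow 2)).sqrt.measurable

lemma one_le_kdvbWeight (α ξ τ : ℝ) : 1 ≤ kdvbWeight α ξ τ := by
  have h := Real.sqrt_le_sqrt (show (1:ℝ) ≤ 1 + (τ - ξ^3)^2 + |ξ|^(4*α) by
    nlinarith [sq_nonneg (τ - ξ^3), Real.rpow_nonneg (abs_nonneg ξ) (4*α)])
  rwa [Real.sqrt_one] at h

lemma kdvbWeight_pos (α ξ τ : ℝ) : 0 < kdvbWeight α ξ τ :=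
  lt_of_lt_of_le one_pos (one_le_kdvbWeight α ξ τ)

lemma continuous_kdvbWeight (α : ℝ) (hα : 0 ≤ α) :
    Continuous (fun p : ℝ × ℝ => kdvbWeight α p.1 p.2) := by
  apply Continuous.sqrt
  apply Continuous.add
  · exact (continuous_const.add ((continuous_snd.sub (continuous_fst.pow 3)).pow 2))
  · exact (Real.continuous_rpow_const (by linarith)).comp (continuous_abs.comp continuous_fst)

lemma measurable_kdvbWeight (α : ℝ) (hα : 0 ≤ α) :
    Measurable (fun p : ℝ × ℝ => kdvbWeight α p.1 p.2) :=
  (continuous_kdvbWeight α hα).measurable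

/-- Upper bound for the weight from bounds on the two pieces. -/
lemma kdvbWeight_le (α ξ τ a W : ℝ) (h1 : |τ - ξ^3| ≤ a) (h2 : |ξ|^(4*α) ≤ W^2)
    (h3 : 1 + a^2 ≤ 2 * W^2) (hW : 0 ≤ W) : kdvbWeight α ξ τ ≤ 2 * W := by
  rw [kdvbWeight]
  have hsq : (τ - ξ^3)^2 ≤ a^2 := by nlinarith [sq_abs (τ - ξ^3), abs_nonneg (τ - ξ^3)]
  have h4 : 1 + (τ - ξ^3)^2 + |ξ|^(4*α) ≤ (2*W)^2 := by nlinarith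
  calc Real.sqrt (1 + (τ-ξ^3)^2 + |ξ|^(4*α)) ≤ Real.sqrt ((2*W)^2) := Real.sqrt_le_sqrt h4
    _ = 2 * W := Real.sqrt_sq (by positivity)

lemma strip_measurableSet (f : ℝ → ℝ) (hf : Measurable f) (a b r : ℝ) :
    MeasurableSet {p : ℝ × ℝ | p.1 ∈ Icc a b ∧ p.2 ∈ Ioo (f p.1 - r) (f p.1 + r)} :=
  measurableSet_regionBetween (hf.sub measurable_const) (hf.add measurable_const) measurableSet_Icc

lemma volume_strip (f : ℝ → ℝ) (hf : Measurable f) (a b r : ℝ) (hab : a ≤ b) (hr : 0 ≤ r) :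
    volume {p : ℝ × ℝ | p.1 ∈ Icc a b ∧ p.2 ∈ Ioo (f p.1 - r) (f p.1 + r)} =
      ENNReal.ofReal (2*r) * ENNReal.ofReal (b - a) := by
  have he : {p : ℝ × ℝ | p.1 ∈ Icc a b ∧ p.2 ∈ Ioo (f p.1 - r) (f p.1 + r)} =
      regionBetween (fun x => f x - r) (fun x => f x + r) (Icc a b) := rfl
  rw [he, MeasureTheory.Measure.volume_eq_prod,
    volume_regionBetween_eq_lintegral' (f := fun x => f x - r) (g := fun x => f x + r)
      (hf.sub measurable_const) (hf.add measurable_const) measurableSet_Icc]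
  have h2 : ∀ y : ℝ, ((fun x => f x + r) - (fun x => f x - r)) y = 2*r := by
    intro y; simp; ring
  simp only [h2]
  rw [MeasureTheory.setLIntegral_const, Real.volume_Icc]

/-- product-of-three upper bound -/
lemma triple_le {f x y X : ℝ} (hf0 : 0 ≤ f) (hf : f ≤ 1) (hx0 : 0 ≤ x) (hx : x ≤ X)
    (hy0 : 0 ≤ y) (hy : y ≤ 1) : f * x * y ≤ X := by
  calc f * x * y ≤ 1 * x * y :=
        mul_le_mul_of_nonneg_right (mul_le_mul_of_nonneg_right hf hx0) hy0
    _ = x * y := by ring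
    _ ≤ X * 1 := mul_le_mul hx hy hy0 (hx0.trans hx)
    _ = X := mul_one X

end aux

section construction

/-- frequency-width parameter -/
noncomputable def kdvGam (α N : ℝ) : ℝ := N ^ (α - 1/2 : ℝ)
/-- modulation-width parameter -/
noncomputable def kdvL (α N : ℝ) : ℝ := 100 * N ^ (2*α)

def kdvA (α N : ℝ) : Set (ℝ×ℝ) :=
  {q : ℝ×ℝ | q.1 ∈ Set.Icc N (N + kdvGam α N) ∧
    q.2 ∈ Set.Ioo (q.1^3 - kdvL α N) (q.1^3 + kdvL α N)}
def kdvB (α N : ℝ) : Set (ℝ×ℝ) :=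
  {q : ℝ×ℝ | q.1 ∈ Set.Icc (-(N + kdvGam α N)) (-N) ∧
    q.2 ∈ Set.Ioo (q.1^3 - kdvL α N) (q.1^3 + kdvL α N)}
def kdvR (α N : ℝ) : Set (ℝ×ℝ) :=
  {p : ℝ×ℝ | p.1 ∈ Set.Icc (kdvGam α N/4) (kdvGam α N/2) ∧
    p.2 ∈ Set.Ioo (((N+p.1)^3 - N^3) - kdvL α N/8) (((N+p.1)^3 - N^3) + kdvL α N/8)}

noncomputable def kdvF (α N : ℝ) : ℝ×ℝ → ℝ := (kdvA α N).indicator (fun _ => (1:ℝ))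
noncomputable def kdvG (α N : ℝ) : ℝ×ℝ → ℝ := (kdvB α N).indicator (fun _ => (1:ℝ))

variable {α N s δ : ℝ}

lemma kdvGam_pos (hN : 0 < N) : 0 < kdvGam α N := Real.rpow_pos_of_pos hN _
lemma kdvL_pos (hN : 0 < N) : 0 < kdvL α N := by
  have := Real.rpow_pos_of_pos hN (2*α); rw [kdvL]; positivity
lemma one_le_rpowN (hN : 1 ≤ N) {e : ℝ} (he : 0 ≤ e) : (1:ℝ) ≤ N ^ e := by
  calc (1:ℝ) = N^(0:ℝ) := (Real.rpow_zero N).symm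
    _ ≤ N^e := Real.rpow_le_rpow_of_exponent_le hN he
lemma kdvGam_le (hα : α ≤ 1) (hN : 1 ≤ N) : kdvGam α N ≤ N := by
  rw [kdvGam]
  calc N^(α - 1/2 : ℝ) ≤ N^(1:ℝ) := Real.rpow_le_rpow_of_exponent_le hN (by linarith)
    _ = N := Real.rpow_one N
lemma kdvGam_sq (hN : 0 < N) : (kdvGam α N)^2 * N = N^(2*α) := by
  rw [kdvGam, ← Real.rpow_natCast (N^(α-1/2:ℝ)) 2, ← Real.rpow_mul hN.le,
    ← Real.rpow_add_one hN.ne']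
  congr 1; push_cast; ring
lemma kdvNsq_gam (hN : 0 < N) : N^2 * kdvGam α N = N^(α+3/2) := by
  rw [kdvGam, ← Real.rpow_natCast N 2, ← Real.rpow_add hN]
  congr 1; push_cast; ring

lemma kdvA_meas : MeasurableSet (kdvA α N) :=
  strip_measurableSet _ ((continuous_pow 3).measurable) _ _ _
lemma kdvB_meas : MeasurableSet (kdvB α N) :=
  strip_measurableSet _ ((continuous_pow 3).measurable) _ _ _
lemma kdvR_meas : MeasurableSet (kdvR α N) :=
  strip_measurableSet _ ((((continuous_const.add continuous_id).pow 3).sub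
    continuous_const).measurable) _ _ _

lemma kdvA_vol (hN : 0 < N) :
    volume (kdvA α N) = ENNReal.ofReal (2 * kdvL α N) * ENNReal.ofReal (kdvGam α N) := by
  have h := volume_strip _ ((continuous_pow 3).measurable) N (N + kdvGam α N) (kdvL α N)
    (by have := kdvGam_pos (α := α) hN; linarith) (kdvL_pos hN).le
  rw [add_sub_cancel_left] at h
  exact h
lemma kdvB_vol (hN : 0 < N) :
    volume (kdvB α N) = ENNReal.ofReal (2 * kdvL α N) * ENNReal.ofReal (kdvGam α N) := by
  have h := volume_strip _ ((continuous_pow 3).measurable) (-(N + kdvGam α N)) (-N) (kdvL α N)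
    (by have := kdvGam_pos (α := α) hN; linarith) (kdvL_pos hN).le
  rw [show -N - -(N + kdvGam α N) = kdvGam α N by ring] at h
  exact h
lemma kdvR_vol (hN : 0 < N) :
    volume (kdvR α N) = ENNReal.ofReal (2 * (kdvL α N/8)) * ENNReal.ofReal (kdvGam α N/4) := by
  have h := volume_strip (fun x => (N+x)^3 - N^3)
    ((((continuous_const.add continuous_id).pow 3).sub
      continuous_const).measurable) (kdvGam α N/4) (kdvGam α N/2) (kdvL α N/8)
    (by have := kdvGam_pos (α := α) hN; linarith) (by have := kdvL_pos (α := α) hN; linarith)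
  rw [show kdvGam α N/2 - kdvGam α N/4 = kdvGam α N/4 by ring] at h
  exact h

lemma kdvF_meas : Measurable (kdvF α N) := measurable_const.indicator kdvA_meas
lemma kdvG_meas : Measurable (kdvG α N) := measurable_const.indicator kdvB_meas
lemma kdvF_nonneg : ∀ p, 0 ≤ kdvF α N p :=
  fun p => Set.indicator_nonneg (fun _ _ => zero_le_one) p
lemma kdvG_nonneg : ∀ p, 0 ≤ kdvG α N p :=
  fun p => Set.indicator_nonneg (fun _ _ => zero_le_one) p
lemma kdvF_le_one : ∀ p, kdvF α N p ≤ 1 := by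
  intro p; rw [kdvF]
  by_cases h : p ∈ kdvA α N
  · rw [Set.indicator_of_mem h]
  · rw [Set.indicator_of_notMem h]; norm_num
lemma kdvG_le_one : ∀ p, kdvG α N p ≤ 1 := by
  intro p; rw [kdvG]
  by_cases h : p ∈ kdvB α N
  · rw [Set.indicator_of_mem h]
  · rw [Set.indicator_of_notMem h]; norm_num
lemma kdvA_vol_fin (hN : 0 < N) : volume (kdvA α N) ≠ ⊤ := by
  rw [kdvA_vol hN]
  exact (ENNReal.mul_lt_top ENNReal.ofReal_lt_top ENNReal.ofReal_lt_top).ne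
lemma kdvB_vol_fin (hN : 0 < N) : volume (kdvB α N) ≠ ⊤ := by
  rw [kdvB_vol hN]
  exact (ENNReal.mul_lt_top ENNReal.ofReal_lt_top ENNReal.ofReal_lt_top).ne
lemma kdvF_mem (hN : 0 < N) : MemLp (kdvF α N) 2 volume :=
  memLp_indicator_const 2 kdvA_meas 1 (Or.inr (kdvA_vol_fin hN))
lemma kdvG_mem (hN : 0 < N) : MemLp (kdvG α N) 2 volume :=
  memLp_indicator_const 2 kdvB_meas 1 (Or.inr (kdvB_vol_fin hN))

end construction
section pointwise

def kdvS (α N : ℝ) (p : ℝ×ℝ) : Set (ℝ×ℝ) :=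
  {q : ℝ×ℝ | q.1 ∈ Set.Icc (p.1+N) (p.1+N+kdvGam α N/2) ∧
    q.2 ∈ Set.Ioo (q.1^3 - kdvL α N/2) (q.1^3 + kdvL α N/2)}

noncomputable def kdvC0 (α s N : ℝ) : ℝ := N^(-s) * (2 * (100 * N^(2*α)))^(-(1/2):ℝ)

variable {α N s : ℝ} {p q : ℝ×ℝ}

lemma kdvS_meas : MeasurableSet (kdvS α N p) :=
  strip_measurableSet _ ((continuous_pow 3).measurable) _ _ _

lemma kdvS_vol (hN : 0 < N) : volume (kdvS α N p) =
    ENNReal.ofReal (2 * (kdvL α N/2)) * ENNReal.ofReal (kdvGam α N/2) := by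
  have h := volume_strip _ ((continuous_pow 3).measurable) (p.1+N) (p.1+N+kdvGam α N/2)
    (kdvL α N/2) (by have := kdvGam_pos (α := α) hN; linarith)
    (by have := kdvL_pos (α := α) hN; linarith)
  rw [show p.1+N+kdvGam α N/2 - (p.1+N) = kdvGam α N/2 by ring] at h
  exact h

lemma kdvR_mem_facts (hp : p ∈ kdvR α N) :
    kdvGam α N/4 ≤ p.1 ∧ p.1 ≤ kdvGam α N/2 ∧
    |p.2 - ((N+p.1)^3 - N^3)| < kdvL α N/8 := by
  obtain ⟨⟨h1, h2⟩, h3, h4⟩ := hp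
  exact ⟨h1, h2, abs_lt.2 ⟨by linarith, by linarith⟩⟩

lemma kdvS_subset_A (hα : 0 < α) (hN : 0 < N) (hp : p ∈ kdvR α N) (hq : q ∈ kdvS α N p) :
    q ∈ kdvA α N := by
  obtain ⟨hp1, hp2, _⟩ := kdvR_mem_facts hp
  obtain ⟨⟨hq1, hq2⟩, hq3, hq4⟩ := hq
  have hγ := kdvGam_pos (α := α) hN
  have hL := kdvL_pos (α := α) hN
  exact ⟨⟨by linarith, by linarith⟩, by linarith, by linarith⟩

lemma kdvS_sub_B (hα₁ : 0 < α) (hα₂ : α ≤ 1) (hN : 1 ≤ N) (hp : p ∈ kdvR α N)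
    (hq : q ∈ kdvS α N p) : p - q ∈ kdvB α N := by
  obtain ⟨hp1, hp2, hp3⟩ := kdvR_mem_facts hp
  obtain ⟨⟨hq1, hq2⟩, hq3, hq4⟩ := hq
  have hN0 : (0:ℝ) < N := lt_of_lt_of_le one_pos hN
  have hγ := kdvGam_pos (α := α) hN0
  have hL := kdvL_pos (α := α) hN0
  have hγN := kdvGam_le (α := α) hα₂ hN
  have hγ2NL : (kdvGam α N)^2*N = kdvL α N/100 := by
    rw [kdvGam_sq (α := α) hN0, kdvL]; ring
  set γ := kdvGam α N with hγdef
  set L := kdvL α N with hLdef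
  have hfst : (p - q).1 = p.1 - q.1 := rfl
  have hsnd : (p - q).2 = p.2 - q.2 := rfl
  constructor
  · rw [hfst]
    constructor
    · linarith
    · linarith
  · rw [hfst, hsnd]
    -- the resonance identity
    have hkey : (N+p.1)^3 - N^3 - q.1^3 - (p.1-q.1)^3
        = -(3*(q.1-p.1-N)*(p.1*(N+q.1))) := by ring
    have ht0 : 0 ≤ q.1 - p.1 - N := by linarith
    have ht1 : q.1 - p.1 - N ≤ γ/2 := by linarith
    have hq1N : N + q.1 ≤ 3*N := by linarith
    have hq1N0 : 0 ≤ N + q.1 := by linarith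
    have hp10 : 0 ≤ p.1 := by linarith
    have hEbound : 3*(q.1-p.1-N)*(p.1*(N+q.1)) ≤ (9/4) * (γ^2*N) := by
      have h1 : p.1*(N+q.1) ≤ (γ/2)*(3*N) :=
        mul_le_mul hp2 hq1N hq1N0 (by linarith)
      have h2 : 3*(q.1-p.1-N) ≤ 3*(γ/2) := by linarith
      have h3 : 0 ≤ p.1*(N+q.1) := mul_nonneg hp10 hq1N0
      calc 3*(q.1-p.1-N)*(p.1*(N+q.1)) ≤ 3*(γ/2)*(p.1*(N+q.1)) :=
            mul_le_mul_of_nonneg_right h2 h3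
        _ ≤ 3*(γ/2)*((γ/2)*(3*N)) := by
            apply mul_le_mul_of_nonneg_left h1 (by positivity)
        _ = (9/4) * (γ^2*N) := by ring
    rw [hγ2NL] at hEbound
    have hE2 : |(N+p.1)^3 - N^3 - q.1^3 - (p.1-q.1)^3| ≤ (9/400) * L := by
      rw [hkey, abs_neg, abs_of_nonneg (by positivity)]
      linarith
    have habs := abs_le.1 hE2
    have habs3 := abs_lt.1 hp3
    constructor
    · linarith [habs.1, habs.2, habs3.1, habs3.2]
    · linarith [habs.1, habs.2, habs3.1, habs3.2]

end pointwise

section pointwise2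
variable {α N s δ : ℝ} {p q : ℝ×ℝ}

lemma kdv_abs4α (hα₁ : 0 < α) (hα₂ : α ≤ 1) (hN : 1 ≤ N) {x : ℝ} (hx : |x| ≤ 2*N) :
    |x|^(4*α) ≤ (100*N^(2*α))^2 := by
  have hN0 : (0:ℝ) < N := lt_of_lt_of_le one_pos hN
  have h1 : |x|^(4*α) ≤ (2*N)^(4*α) := Real.rpow_le_rpow (abs_nonneg x) hx (by linarith)
  have h2 : (2*N)^(4*α) = 2^(4*α) * N^(4*α) := Real.mul_rpow (by norm_num) hN0.le
  have h3 : (2:ℝ)^(4*α) ≤ 2^(4:ℝ) := Real.rpow_le_rpow_of_exponent_le one_le_two (by linarith)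
  have h4 : (2:ℝ)^(4:ℝ) = 16 := by
    rw [show (4:ℝ) = ((4:ℕ):ℝ) by norm_num, Real.rpow_natCast]; norm_num
  have h5 : N^(4*α) = (N^(2*α))^2 := by
    rw [← Real.rpow_natCast (N^(2*α)) 2, ← Real.rpow_mul hN0.le]
    congr 1; push_cast; ring
  have h6 : (0:ℝ) ≤ N^(4*α) := Real.rpow_nonneg hN0.le _
  nlinarith [sq_nonneg (N^(2*α))]

lemma kdv_input_w (hα₁ : 0 < α) (hα₂ : α ≤ 1) (hN : 1 ≤ N) (ξ τ : ℝ)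
    (h2 : |ξ| ≤ 2*N) (h3 : |τ - ξ^3| ≤ kdvL α N) :
    kdvbWeight α ξ τ ≤ 2*(100*N^(2*α)) := by
  have hN0 : (0:ℝ) < N := lt_of_lt_of_le one_pos hN
  have hX := one_le_rpowN hN (show (0:ℝ) ≤ 2*α by linarith)
  apply kdvbWeight_le α ξ τ (kdvL α N) (100*N^(2*α)) h3 (kdv_abs4α hα₁ hα₂ hN h2)
  · rw [kdvL]; nlinarith
  · positivity

lemma kdv_input_w_rpow (hα₁ : 0 < α) (hα₂ : α ≤ 1) (hN : 1 ≤ N) (ξ τ : ℝ)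
    (h2 : |ξ| ≤ 2*N) (h3 : |τ - ξ^3| ≤ kdvL α N) :
    (2*(100*N^(2*α)))^(-(1/2):ℝ) ≤ kdvbWeight α ξ τ ^ (-(1/2):ℝ) :=
  Real.rpow_le_rpow_of_nonpos (kdvbWeight_pos α ξ τ) (kdv_input_w hα₁ hα₂ hN ξ τ h2 h3)
    (by norm_num)

lemma kdv_jap_rpow (hnegs : 0 ≤ -s) (hN0 : (0:ℝ) ≤ N) {ξ : ℝ} (h : N ≤ |ξ|) :
    N^(-s) ≤ jap ξ ^ (-s) :=
  Real.rpow_le_rpow hN0 (h.trans (abs_le_jap ξ)) hnegs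

lemma kdvC0_pos (hN : 0 < N) : 0 < kdvC0 α s N := by
  rw [kdvC0]
  have h1 : (0:ℝ) < N^(-s) := Real.rpow_pos_of_pos hN _
  have h2 : (0:ℝ) < N^(2*α) := Real.rpow_pos_of_pos hN _
  positivity

lemma kdv_S_integrand (hα₁ : 0 < α) (hα₂ : α ≤ 1) (hN : 1 ≤ N) (hnegs : 0 ≤ -s)
    (hp : p ∈ kdvR α N) (hq : q ∈ kdvS α N p) :
    kdvC0 α s N * kdvC0 α s N ≤
      (kdvF α N q * jap q.1 ^ (-s) * kdvbWeight α q.1 q.2 ^ (-(1/2:ℝ))) *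
      (kdvG α N (p - q) * jap (p.1 - q.1) ^ (-s) *
        kdvbWeight α (p.1 - q.1) (p.2 - q.2) ^ (-(1/2:ℝ))) := by
  have hN0 : (0:ℝ) < N := lt_of_lt_of_le one_pos hN
  have hγ := kdvGam_pos (α := α) hN0
  have hγN := kdvGam_le (α := α) hα₂ hN
  have hqA : q ∈ kdvA α N := kdvS_subset_A hα₁ hN0 hp hq
  have hqB : p - q ∈ kdvB α N := kdvS_sub_B hα₁ hα₂ hN hp hq
  have hFq : kdvF α N q = 1 := Set.indicator_of_mem hqA _
  have hGq : kdvG α N (p - q) = 1 := Set.indicator_of_mem hqB _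
  obtain ⟨hp1, hp2, hp3⟩ := kdvR_mem_facts hp
  obtain ⟨⟨hq1, hq2⟩, hq3, hq4⟩ := hq
  have hL := kdvL_pos (α := α) hN0
  -- ranges for q
  have hq10 : N ≤ q.1 := by linarith
  have hq1abs : |q.1| = q.1 := abs_of_nonneg (by linarith)
  have hq1le : |q.1| ≤ 2*N := by rw [hq1abs]; linarith
  have hq1ge : N ≤ |q.1| := by rw [hq1abs]; exact hq10
  have hqmod : |q.2 - q.1^3| ≤ kdvL α N := by
    rw [abs_le]; constructor <;> linarith
  -- ranges for p - q
  have hpq1 : |p.1 - q.1| = q.1 - p.1 := by rw [abs_sub_comm]; exact abs_of_nonneg (by linarith)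
  have hpq1ge : N ≤ |p.1 - q.1| := by rw [hpq1]; linarith
  have hpq1le : |p.1 - q.1| ≤ 2*N := by rw [hpq1]; linarith
  have hpqmod : |p.2 - q.2 - (p.1 - q.1)^3| ≤ kdvL α N := by
    obtain ⟨hB1, hB2, hB3⟩ := hqB
    have hsnd : (p - q).2 = p.2 - q.2 := rfl
    have hfst : (p - q).1 = p.1 - q.1 := rfl
    rw [hsnd, hfst] at hB2 hB3
    rw [abs_le]; constructor <;> [linarith; linarith]
  -- assemble
  have l1 : kdvC0 α s N ≤ kdvF α N q * jap q.1 ^ (-s) * kdvbWeight α q.1 q.2 ^ (-(1/2:ℝ)) := by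
    rw [hFq, one_mul, kdvC0]
    exact mul_le_mul (kdv_jap_rpow hnegs hN0.le hq1ge)
      (kdv_input_w_rpow hα₁ hα₂ hN _ _ hq1le hqmod)
      (Real.rpow_nonneg (by positivity) _) (Real.rpow_nonneg (jap_pos _).le _)
  have l2 : kdvC0 α s N ≤ kdvG α N (p - q) * jap (p.1 - q.1) ^ (-s) *
      kdvbWeight α (p.1 - q.1) (p.2 - q.2) ^ (-(1/2:ℝ)) := by
    rw [hGq, one_mul, kdvC0]
    exact mul_le_mul (kdv_jap_rpow hnegs hN0.le hpq1ge)
      (kdv_input_w_rpow hα₁ hα₂ hN _ _ hpq1le hpqmod)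
      (Real.rpow_nonneg (by positivity) _) (Real.rpow_nonneg (jap_pos _).le _)
  exact mul_le_mul l1 l2 (kdvC0_pos hN0).le
    (le_trans (kdvC0_pos hN0).le l1)

lemma kdv_integrand_nonneg (p q : ℝ×ℝ) :
    0 ≤ (kdvF α N q * jap q.1 ^ (-s) * kdvbWeight α q.1 q.2 ^ (-(1/2:ℝ))) *
      (kdvG α N (p - q) * jap (p.1 - q.1) ^ (-s) *
        kdvbWeight α (p.1 - q.1) (p.2 - q.2) ^ (-(1/2:ℝ))) := by
  apply mul_nonneg <;>
  · apply mul_nonneg (mul_nonneg (by first | exact kdvF_nonneg _ | exact kdvG_nonneg _)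
      (Real.rpow_nonneg (jap_pos _).le _)) (Real.rpow_nonneg (kdvbWeight_pos _ _ _).le _)

lemma kdv_integrand_le (hα₂ : α ≤ 1) (hN : 1 ≤ N) (hnegs : 0 ≤ -s) (p q : ℝ×ℝ) :
    (kdvF α N q * jap q.1 ^ (-s) * kdvbWeight α q.1 q.2 ^ (-(1/2:ℝ))) *
      (kdvG α N (p - q) * jap (p.1 - q.1) ^ (-s) *
        kdvbWeight α (p.1 - q.1) (p.2 - q.2) ^ (-(1/2:ℝ))) ≤
    (kdvA α N).indicator (fun _ => (1+2*N)^(-s) * (1+(|p.1|+2*N))^(-s)) q := by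
  by_cases hqA : q ∈ kdvA α N
  · rw [Set.indicator_of_mem hqA]
    have hN0 : (0:ℝ) < N := lt_of_lt_of_le one_pos hN
    have hγN := kdvGam_le (α := α) hα₂ hN
    obtain ⟨⟨hq1, hq2⟩, _, _⟩ := hqA
    have hq1le : |q.1| ≤ 2*N := by
      rw [abs_of_nonneg (by linarith)]; linarith
    have e1 : kdvF α N q * jap q.1 ^ (-s) * kdvbWeight α q.1 q.2 ^ (-(1/2:ℝ)) ≤
        (1+2*N)^(-s) := by
      apply triple_le (kdvF_nonneg q) (kdvF_le_one q) (Real.rpow_nonneg (jap_pos _).le _)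
        _ (Real.rpow_nonneg (kdvbWeight_pos _ _ _).le _)
        (Real.rpow_le_one_of_one_le_of_nonpos (one_le_kdvbWeight _ _ _) (by norm_num))
      exact Real.rpow_le_rpow (jap_pos _).le
        ((jap_le q.1).trans (by linarith)) hnegs
    have e2 : kdvG α N (p-q) * jap (p.1 - q.1) ^ (-s) *
        kdvbWeight α (p.1 - q.1) (p.2 - q.2) ^ (-(1/2:ℝ)) ≤ (1+(|p.1|+2*N))^(-s) := by
      apply triple_le (kdvG_nonneg _) (kdvG_le_one _) (Real.rpow_nonneg (jap_pos _).le _)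
        _ (Real.rpow_nonneg (kdvbWeight_pos _ _ _).le _)
        (Real.rpow_le_one_of_one_le_of_nonpos (one_le_kdvbWeight _ _ _) (by norm_num))
      apply Real.rpow_le_rpow (jap_pos _).le _ hnegs
      calc jap (p.1 - q.1) ≤ 1 + |p.1 - q.1| := jap_le _
        _ ≤ 1 + (|p.1| + |q.1|) := by linarith [abs_sub p.1 q.1]
        _ ≤ 1 + (|p.1| + 2*N) := by linarith
    have h20 : (0:ℝ) ≤ (1+2*N)^(-s) := Real.rpow_nonneg (by linarith) _
    exact mul_le_mul e1 e2 (mul_nonneg (mul_nonneg (kdvG_nonneg _)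
      (Real.rpow_nonneg (jap_pos _).le _)) (Real.rpow_nonneg (kdvbWeight_pos _ _ _).le _)) h20
  · rw [Set.indicator_of_notMem hqA]
    have hFq : kdvF α N q = 0 := Set.indicator_of_notMem hqA _
    rw [hFq]
    ring_nf
    exact le_refl 0

end pointwise2
section pointwise3
variable {α N s δ : ℝ} {p q : ℝ×ℝ}

lemma kdv_integrable (hα₁ : 0 < α) (hα₂ : α ≤ 1) (hN : 1 ≤ N) (hnegs : 0 ≤ -s) (p : ℝ×ℝ) :
    Integrable (fun q : ℝ×ℝ =>
      (kdvF α N q * jap q.1 ^ (-s) * kdvbWeight α q.1 q.2 ^ (-(1/2:ℝ))) *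
      (kdvG α N (p - q) * jap (p.1 - q.1) ^ (-s) *
        kdvbWeight α (p.1 - q.1) (p.2 - q.2) ^ (-(1/2:ℝ)))) volume := by
  have hN0 : (0:ℝ) < N := lt_of_lt_of_le one_pos hN
  have hm : Measurable (fun q : ℝ×ℝ =>
      (kdvF α N q * jap q.1 ^ (-s) * kdvbWeight α q.1 q.2 ^ (-(1/2:ℝ))) *
      (kdvG α N (p - q) * jap (p.1 - q.1) ^ (-s) *
        kdvbWeight α (p.1 - q.1) (p.2 - q.2) ^ (-(1/2:ℝ)))) := by
    apply Measurable.mul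
    · exact ((kdvF_meas.mul ((measurable_jap.comp measurable_fst).pow measurable_const)).mul
        ((measurable_kdvbWeight α hα₁.le).pow measurable_const))
    · exact (((kdvG_meas.comp (measurable_const.sub measurable_id)).mul
        ((measurable_jap.comp (measurable_const.sub measurable_fst)).pow measurable_const)).mul
        (((measurable_kdvbWeight α hα₁.le).comp
          ((measurable_const.sub measurable_fst).prodMk
            (measurable_const.sub measurable_snd))).pow measurable_const))
  have hKint : Integrable ((kdvA α N).indicator
      (fun _ => (1+2*N)^(-s) * (1+(|p.1|+2*N))^(-s))) volume := by
    rw [integrable_indicator_iff kdvA_meas]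
    exact integrableOn_const (kdvA_vol_fin hN0)
  apply hKint.mono' hm.aestronglyMeasurable
  apply ae_of_all
  intro q
  rw [Real.norm_eq_abs, abs_of_nonneg (kdv_integrand_nonneg p q)]
  exact kdv_integrand_le hα₂ hN hnegs p q

lemma kdv_integral_ge (hα₁ : 0 < α) (hα₂ : α ≤ 1) (hN : 1 ≤ N) (hnegs : 0 ≤ -s)
    (hp : p ∈ kdvR α N) :
    kdvC0 α s N * kdvC0 α s N * (kdvL α N * (kdvGam α N/2)) ≤
      ∫ q : ℝ×ℝ, (kdvF α N q * jap q.1 ^ (-s) * kdvbWeight α q.1 q.2 ^ (-(1/2:ℝ))) *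
        (kdvG α N (p - q) * jap (p.1 - q.1) ^ (-s) *
          kdvbWeight α (p.1 - q.1) (p.2 - q.2) ^ (-(1/2:ℝ))) := by
  have hN0 : (0:ℝ) < N := lt_of_lt_of_le one_pos hN
  have hγ := kdvGam_pos (α := α) hN0
  have hL := kdvL_pos (α := α) hN0
  have hint := kdv_integrable hα₁ hα₂ hN hnegs p
  have hvolS := kdvS_vol (α := α) (N := N) (p := p) hN0
  have hfin : volume (kdvS α N p) ≠ ⊤ := by
    rw [hvolS]
    exact (ENNReal.mul_lt_top ENNReal.ofReal_lt_top ENNReal.ofReal_lt_top).ne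
  have h1 := setIntegral_ge_of_const_le kdvS_meas hfin
    (fun q hq => kdv_S_integrand hα₁ hα₂ hN hnegs hp hq) hint.integrableOn
  have htor : (volume (kdvS α N p)).toReal = kdvL α N * (kdvGam α N/2) := by
    rw [hvolS, ENNReal.toReal_mul, ENNReal.toReal_ofReal (by linarith),
      ENNReal.toReal_ofReal (by linarith)]
    ring
  rw [measureReal_def, htor, smul_eq_mul] at h1
  have h2 := setIntegral_le_integral (s := kdvS α N p) hint (ae_of_all _ (fun q => kdv_integrand_nonneg p q))
  linarith

lemma kdv_output_w (hα₁ : 0 < α) (hα₂ : α ≤ 1) (hN : 1 ≤ N) (hp : p ∈ kdvR α N) :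
    kdvbWeight α p.1 p.2 ≤ 30*N^(α+3/2) := by
  have hN0 : (0:ℝ) < N := lt_of_lt_of_le one_pos hN
  have hγ := kdvGam_pos (α := α) hN0
  have hγN := kdvGam_le (α := α) hα₂ hN
  have hX1 := one_le_rpowN hN (show (0:ℝ) ≤ α+3/2 by linarith)
  obtain ⟨hp1, hp2, hp3⟩ := kdvR_mem_facts hp
  have habs3 := abs_lt.1 hp3
  have hγ2NL : (kdvGam α N)^2*N = kdvL α N/100 := by
    rw [kdvGam_sq (α := α) hN0, kdvL]; ring
  have hNsq := kdvNsq_gam (α := α) hN0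
  have hp10 : 0 < p.1 := by linarith
  have h1 : |p.2 - p.1^3| ≤ 15*N^(α+3/2) := by
    have hc : (N+p.1)^3 - N^3 - p.1^3 = 3*N^2*p.1 + 3*N*p.1^2 := by ring
    have hb1 : 3*N^2*p.1 ≤ (3/2)*(N^2*kdvGam α N) := by nlinarith
    have hb2 : 3*N*p.1^2 ≤ (3/4)*((kdvGam α N)^2*N) := by nlinarith
    have hb3 : (kdvGam α N)^2*N ≤ N^2*kdvGam α N := by nlinarith
    have hb4 : kdvL α N/8 ≤ (25/2)*(N^2*kdvGam α N) := by
      have : kdvL α N/8 = (25/2)*((kdvGam α N)^2*N) := by rw [hγ2NL]; ring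
      linarith
    rw [abs_le]
    rw [hNsq] at *
    constructor <;> nlinarith
  have ha1 : |p.1| ≤ kdvGam α N := by rw [abs_of_pos hp10]; linarith
  have ha2 : |p.1|^(4*α) ≤ (kdvGam α N)^(4*α) :=
    Real.rpow_le_rpow (abs_nonneg _) ha1 (by linarith)
  have ha3 : (kdvGam α N)^(4*α) = N^((α-1/2)*(4*α)) := by
    rw [kdvGam, ← Real.rpow_mul hN0.le]
  have ha4 : N^((α-1/2)*(4*α)) ≤ N^(2*α) :=
    Real.rpow_le_rpow_of_exponent_le hN (by nlinarith)
  have ha5 : N^(2*α) ≤ N^(2*α+3) := Real.rpow_le_rpow_of_exponent_le hN (by linarith)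
  have ha6 : N^(2*α+3) = (N^(α+3/2))^2 := by
    rw [← Real.rpow_natCast (N^(α+3/2)) 2, ← Real.rpow_mul hN0.le]
    congr 1; push_cast; ring
  have ha7 : (N^(α+3/2))^2 ≤ (15*N^(α+3/2))^2 := by nlinarith
  have h2 : |p.1|^(4*α) ≤ (15*N^(α+3/2))^2 :=
    calc |p.1|^(4*α) ≤ (kdvGam α N)^(4*α) := ha2
      _ = N^((α-1/2)*(4*α)) := ha3
      _ ≤ N^(2*α) := ha4
      _ ≤ N^(2*α+3) := ha5
      _ = (N^(α+3/2))^2 := ha6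
      _ ≤ (15*N^(α+3/2))^2 := ha7
  have h := kdvbWeight_le α p.1 p.2 (15*N^(α+3/2)) (15*N^(α+3/2)) h1 h2 (by nlinarith)
    (by positivity)
  linarith

lemma kdv_output_w_rpow (hα₁ : 0 < α) (hα₂ : α ≤ 1) (hN : 1 ≤ N) (hδ0 : 0 < δ)
    (hδ4 : δ < 1/4) (hp : p ∈ kdvR α N) :
    (30*N^(α+3/2))^(-(1/2:ℝ)+δ) ≤ kdvbWeight α p.1 p.2 ^ (-(1/2:ℝ)+δ) :=
  Real.rpow_le_rpow_of_nonpos (kdvbWeight_pos α p.1 p.2) (kdv_output_w hα₁ hα₂ hN hp)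
    (by linarith)

lemma kdv_output_jap_rpow (hα₂ : α ≤ 1) (hN : 1 ≤ N) (hsneg : s ≤ 0) (hp : p ∈ kdvR α N) :
    (Real.sqrt 2)^s * N^((max (α - 1/2) 0)*s) ≤ jap p.1 ^ s := by
  have hN0 : (0:ℝ) < N := lt_of_lt_of_le one_pos hN
  have hγ := kdvGam_pos (α := α) hN0
  obtain ⟨hp1, hp2, _⟩ := kdvR_mem_facts hp
  have hβ : kdvGam α N ≤ N^(max (α - 1/2) 0) := by
    rw [kdvGam]
    exact Real.rpow_le_rpow_of_exponent_le hN (le_max_left _ _)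
  have hβ1 : (1:ℝ) ≤ N^(max (α - 1/2) 0) := one_le_rpowN hN (le_max_right _ _)
  have hjap : jap p.1 ≤ Real.sqrt 2 * N^(max (α - 1/2) 0) := by
    rw [jap]
    have h1 : 1 + p.1^2 ≤ 2 * (N^(max (α - 1/2) 0))^2 := by nlinarith
    calc Real.sqrt (1 + p.1^2) ≤ Real.sqrt (2 * (N^(max (α - 1/2) 0))^2) :=
          Real.sqrt_le_sqrt h1
      _ = Real.sqrt 2 * N^(max (α - 1/2) 0) := by
          rw [Real.sqrt_mul (by norm_num), Real.sqrt_sq (by positivity)]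
  have h2 := Real.rpow_le_rpow_of_nonpos (jap_pos p.1) hjap hsneg
  calc (Real.sqrt 2)^s * N^((max (α - 1/2) 0)*s)
      = (Real.sqrt 2 * N^(max (α - 1/2) 0))^s := by
        rw [Real.mul_rpow (Real.sqrt_nonneg 2) (Real.rpow_nonneg hN0.le _),
          Real.rpow_mul hN0.le]
    _ ≤ jap p.1 ^ s := h2

noncomputable def kdvm (α s δ N : ℝ) : ℝ :=
  (kdvGam α N/4) * ((Real.sqrt 2)^s * N^((max (α - 1/2) 0)*s)) *
  ((30*N^(α+3/2))^(-(1/2:ℝ)+δ)) *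
  (kdvC0 α s N * kdvC0 α s N * (kdvL α N * (kdvGam α N/2)))

lemma kdvm_pos (hN : 0 < N) (hα₁ : 0 < α) : 0 < kdvm α s δ N := by
  have h1 := kdvGam_pos (α := α) hN
  have h2 := kdvL_pos (α := α) hN
  have h3 := kdvC0_pos (α := α) (s := s) hN
  have h4 : (0:ℝ) < (Real.sqrt 2)^s := Real.rpow_pos_of_pos (by positivity) _
  have h5 : (0:ℝ) < N^((max (α - 1/2) 0)*s) := Real.rpow_pos_of_pos hN _
  have hb : (0:ℝ) < 30*N^(α+3/2) := by
    have := Real.rpow_pos_of_pos hN (α+3/2); linarith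
  have h6 : (0:ℝ) < (30*N^(α+3/2))^(-(1/2:ℝ)+δ) := Real.rpow_pos_of_pos hb _
  rw [kdvm]
  positivity

lemma kdv_h_ge (hα₁ : 0 < α) (hα₂ : α ≤ 1) (hN : 1 ≤ N) (hnegs : 0 ≤ -s) (hsneg : s ≤ 0)
    (hδ0 : 0 < δ) (hδ4 : δ < 1/4) (hp : p ∈ kdvR α N) :
    kdvm α s δ N ≤ |p.1| * jap p.1 ^ s * kdvbWeight α p.1 p.2 ^ (-(1/2:ℝ)+δ) *
      ∫ q : ℝ×ℝ, (kdvF α N q * jap q.1 ^ (-s) * kdvbWeight α q.1 q.2 ^ (-(1/2:ℝ))) *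
        (kdvG α N (p - q) * jap (p.1 - q.1) ^ (-s) *
          kdvbWeight α (p.1 - q.1) (p.2 - q.2) ^ (-(1/2:ℝ))) := by
  have hN0 : (0:ℝ) < N := lt_of_lt_of_le one_pos hN
  have hγ := kdvGam_pos (α := α) hN0
  have hL := kdvL_pos (α := α) hN0
  have hC0 := kdvC0_pos (α := α) (s := s) hN0
  obtain ⟨hp1, hp2, _⟩ := kdvR_mem_facts hp
  have b1 : kdvGam α N/4 ≤ |p.1| := by
    rw [abs_of_pos (by linarith)]; exact hp1
  have b2 := kdv_output_jap_rpow hα₂ hN hsneg hp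
  have b3 := kdv_output_w_rpow hα₁ hα₂ hN hδ0 hδ4 hp
  have b4 := kdv_integral_ge hα₁ hα₂ hN hnegs hp
  have n2 : (0:ℝ) ≤ (Real.sqrt 2)^s * N^((max (α - 1/2) 0)*s) :=
    mul_nonneg (Real.rpow_nonneg (Real.sqrt_nonneg 2) _) (Real.rpow_nonneg hN0.le _)
  have hb : (0:ℝ) < 30*N^(α+3/2) := by
    have := Real.rpow_pos_of_pos hN0 (α+3/2); linarith
  have n3 : (0:ℝ) ≤ (30*N^(α+3/2))^(-(1/2:ℝ)+δ) := Real.rpow_nonneg hb.le _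
  have n4 : (0:ℝ) ≤ kdvC0 α s N * kdvC0 α s N * (kdvL α N * (kdvGam α N/2)) := by positivity
  have m12 : kdvGam α N/4 * ((Real.sqrt 2)^s * N^((max (α - 1/2) 0)*s)) ≤
      |p.1| * jap p.1 ^ s :=
    mul_le_mul b1 b2 n2 (abs_nonneg _)
  have m123 : kdvGam α N/4 * ((Real.sqrt 2)^s * N^((max (α - 1/2) 0)*s)) *
      ((30*N^(α+3/2))^(-(1/2:ℝ)+δ)) ≤
      |p.1| * jap p.1 ^ s * kdvbWeight α p.1 p.2 ^ (-(1/2:ℝ)+δ) :=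
    mul_le_mul m12 b3 n3
      (mul_nonneg (abs_nonneg _) (Real.rpow_nonneg (jap_pos _).le _))
  rw [kdvm]
  exact mul_le_mul m123 b4 n4
    (mul_nonneg (mul_nonneg (abs_nonneg _) (Real.rpow_nonneg (jap_pos _).le _))
      (Real.rpow_nonneg (kdvbWeight_pos _ _ _).le _))

end pointwise3
section elp
variable {α N s δ : ℝ}

lemma kdv_eLpNorm_F (hN : 0 < N) :
    eLpNorm (kdvF α N) 2 volume =
      (ENNReal.ofReal (2 * kdvL α N) * ENNReal.ofReal (kdvGam α N)) ^ ((1:ℝ)/2) := by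
  rw [kdvF, eLpNorm_indicator_const kdvA_meas (by norm_num) (by norm_num), kdvA_vol hN]
  simp

lemma kdv_eLpNorm_G (hN : 0 < N) :
    eLpNorm (kdvG α N) 2 volume =
      (ENNReal.ofReal (2 * kdvL α N) * ENNReal.ofReal (kdvGam α N)) ^ ((1:ℝ)/2) := by
  rw [kdvG, eLpNorm_indicator_const kdvB_meas (by norm_num) (by norm_num), kdvB_vol hN]
  simp

lemma kdv_eLpNorm_ge (hα₁ : 0 < α) (hα₂ : α ≤ 1) (hN : 1 ≤ N) (hnegs : 0 ≤ -s) (hsneg : s ≤ 0)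
    (hδ0 : 0 < δ) (hδ4 : δ < 1/4) :
    ENNReal.ofReal (kdvm α s δ N) *
      (ENNReal.ofReal (2 * (kdvL α N/8)) * ENNReal.ofReal (kdvGam α N/4)) ^ ((1:ℝ)/2) ≤
    eLpNorm (fun p : ℝ × ℝ =>
      |p.1| * jap p.1 ^ s * kdvbWeight α p.1 p.2 ^ (-(1/2:ℝ) + δ) *
        ∫ q : ℝ × ℝ,
          (kdvF α N q * jap q.1 ^ (-s) * kdvbWeight α q.1 q.2 ^ (-(1/2:ℝ))) *
          (kdvG α N (p - q) * jap (p.1 - q.1) ^ (-s) *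
            kdvbWeight α (p.1 - q.1) (p.2 - q.2) ^ (-(1/2:ℝ)))) 2 volume := by
  have hN0 : (0:ℝ) < N := lt_of_lt_of_le one_pos hN
  have hm0 : 0 < kdvm α s δ N := kdvm_pos hN0 hα₁
  rw [eLpNorm_eq_lintegral_rpow_enorm_toReal two_ne_zero ENNReal.ofNat_ne_top]
  have ht2 : (2:ℝ≥0∞).toReal = (2:ℝ) := by norm_num
  rw [ht2]
  have key : (ENNReal.ofReal (kdvm α s δ N)) ^ (2:ℝ) * volume (kdvR α N) ≤
      ∫⁻ p : ℝ×ℝ, (‖|p.1| * jap p.1 ^ s * kdvbWeight α p.1 p.2 ^ (-(1/2:ℝ) + δ) *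
        ∫ q : ℝ × ℝ,
          (kdvF α N q * jap q.1 ^ (-s) * kdvbWeight α q.1 q.2 ^ (-(1/2:ℝ))) *
          (kdvG α N (p - q) * jap (p.1 - q.1) ^ (-s) *
            kdvbWeight α (p.1 - q.1) (p.2 - q.2) ^ (-(1/2:ℝ)))‖₊ : ℝ≥0∞) ^ (2:ℝ) := by
    calc (ENNReal.ofReal (kdvm α s δ N)) ^ (2:ℝ) * volume (kdvR α N)
        = ∫⁻ _ in kdvR α N, (ENNReal.ofReal (kdvm α s δ N)) ^ (2:ℝ) :=
          (setLIntegral_const _ _).symm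
      _ = ∫⁻ p, (kdvR α N).indicator (fun _ => (ENNReal.ofReal (kdvm α s δ N)) ^ (2:ℝ)) p :=
          (lintegral_indicator kdvR_meas _).symm
      _ ≤ _ := by
          apply lintegral_mono
          intro p
          by_cases hp : p ∈ kdvR α N
          · rw [Set.indicator_of_mem hp]
            apply ENNReal.rpow_le_rpow _ (by norm_num : (0:ℝ) ≤ 2)
            have h1 := kdv_h_ge hα₁ hα₂ hN hnegs hsneg hδ0 hδ4 hp
            calc ENNReal.ofReal (kdvm α s δ N) ≤ ENNReal.ofReal _ :=
                  ENNReal.ofReal_le_ofReal h1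
              _ = _ := (Real.enorm_eq_ofReal (le_trans hm0.le h1)).symm
          · rw [Set.indicator_of_notMem hp]
            exact zero_le
  calc ENNReal.ofReal (kdvm α s δ N) *
      (ENNReal.ofReal (2 * (kdvL α N/8)) * ENNReal.ofReal (kdvGam α N/4)) ^ ((1:ℝ)/2)
      = ((ENNReal.ofReal (kdvm α s δ N)) ^ (2:ℝ) * volume (kdvR α N)) ^ ((1:ℝ)/2) := by
        rw [kdvR_vol hN0]
        rw [ENNReal.mul_rpow_of_nonneg ((ENNReal.ofReal (kdvm α s δ N)) ^ (2:ℝ))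
          (ENNReal.ofReal (2 * (kdvL α N/8)) * ENNReal.ofReal (kdvGam α N/4))
          (by norm_num : (0:ℝ) ≤ 1/2)]
        rw [← ENNReal.rpow_mul, show (2:ℝ)*(1/2) = 1 by norm_num, ENNReal.rpow_one]
    _ ≤ _ := ENNReal.rpow_le_rpow key (by norm_num)

end elp
section ratio
variable {α N s δ C : ℝ}

noncomputable def kdvK (s δ : ℝ) : ℝ :=
  (1/4) * (Real.sqrt 2)^s * ((30:ℝ)^(-(1/2:ℝ)+δ)) * ((1/200) * 50 * (5/2))

noncomputable def kdvEt (α s δ : ℝ) : ℝ :=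
  α-1/2 + (max (α - 1/2) 0)*s + (α+3/2)*(-(1/2)+δ) + (-s + -s) + -(2*α) +
    (2*α+(α-1/2)) + (2*α+(α-1/2))*(1/2)

lemma kdvK_pos : 0 < kdvK s δ := by
  rw [kdvK]
  have h1 : (0:ℝ) < (Real.sqrt 2)^s := Real.rpow_pos_of_pos (by positivity) s
  have h2 : (0:ℝ) < (30:ℝ)^(-(1/2:ℝ)+δ) := Real.rpow_pos_of_pos (by norm_num) _
  positivity

lemma kdvC0_sq (hN : (0:ℝ) < N) :
    kdvC0 α s N * kdvC0 α s N = (1/200) * (N^(-s + -s) * N^(-(2*α))) := by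
  rw [kdvC0]
  have hX : (0:ℝ) < 2*(100*N^(2*α)) := by
    have := Real.rpow_pos_of_pos hN (2*α); linarith
  have e1 : (2*(100*N^(2*α)))^(-(1/2):ℝ) * (2*(100*N^(2*α)))^(-(1/2):ℝ)
      = (2*(100*N^(2*α)))⁻¹ := by
    rw [← Real.rpow_add hX, show (-(1/2)+-(1/2):ℝ) = -1 by norm_num, Real.rpow_neg_one]
  have e2 : N^(-s) * N^(-s) = N^(-s + -s) := (Real.rpow_add hN _ _).symm
  have hXne : N^(2*α) ≠ 0 := (Real.rpow_pos_of_pos hN _).ne'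
  have e3 : (2*(100*N^(2*α)))⁻¹ = (1/200) * N^(-(2*α)) := by
    rw [Real.rpow_neg hN.le]
    field_simp
    ring
  calc (N^(-s) * (2*(100*N^(2*α)))^(-(1/2):ℝ)) * (N^(-s) * (2*(100*N^(2*α)))^(-(1/2):ℝ))
      = (N^(-s) * N^(-s)) * ((2*(100*N^(2*α)))^(-(1/2):ℝ) * (2*(100*N^(2*α)))^(-(1/2):ℝ)) := by
        ring
    _ = N^(-s + -s) * (2*(100*N^(2*α)))⁻¹ := by rw [e1, e2]
    _ = (1/200) * (N^(-s + -s) * N^(-(2*α))) := by rw [e3]; ring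

lemma kdv_main_eq (hN : (0:ℝ) < N) :
    kdvm α s δ N * ((2*(kdvL α N/8))*(kdvGam α N/4))^((1:ℝ)/2)
      = kdvK s δ * N^(kdvEt α s δ) := by
  have f3 : (30*N^(α+3/2))^(-(1/2:ℝ)+δ)
      = (30:ℝ)^(-(1/2:ℝ)+δ) * N^((α+3/2)*(-(1/2)+δ)) := by
    rw [Real.mul_rpow (by norm_num) (Real.rpow_nonneg hN.le _), ← Real.rpow_mul hN.le]
  have fL : kdvL α N * (kdvGam α N/2) = 50 * N^(2*α+(α-1/2)) := by
    rw [kdvL, kdvGam, Real.rpow_add hN]; ring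
  have fs : ((2*(kdvL α N/8))*(kdvGam α N/4))^((1:ℝ)/2)
      = (5/2) * N^((2*α+(α-1/2))*(1/2)) := by
    rw [kdvL, kdvGam]
    rw [show 2*((100*N^(2*α))/8)*(N^(α-1/2:ℝ)/4) = (25/4)*(N^(2*α)*N^(α-1/2:ℝ)) by ring]
    rw [← Real.rpow_add hN]
    rw [Real.mul_rpow (by norm_num) (Real.rpow_nonneg hN.le _)]
    rw [← Real.rpow_mul hN.le]
    congr 1
    rw [show (25/4:ℝ) = ((5/2:ℝ))^(2:ℕ) by norm_num, ← Real.rpow_natCast ((5/2:ℝ)) 2,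
      ← Real.rpow_mul (by norm_num : (0:ℝ) ≤ 5/2)]
    norm_num
  have fcollapse : N^(α-1/2:ℝ) * N^((max (α - 1/2) 0)*s) * N^((α+3/2)*(-(1/2)+δ)) *
      N^(-s + -s) * N^(-(2*α)) * N^(2*α+(α-1/2)) * N^((2*α+(α-1/2))*(1/2))
      = N^(kdvEt α s δ) := by
    rw [← Real.rpow_add hN, ← Real.rpow_add hN, ← Real.rpow_add hN, ← Real.rpow_add hN,
      ← Real.rpow_add hN, ← Real.rpow_add hN, kdvEt]
  rw [kdvm, fs, f3, kdvC0_sq hN, fL, kdvGam, kdvK, ← fcollapse]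
  ring

lemma kdv_ratio (hN : 1 ≤ N) (hC : 0 < C)
    (hE : 3/2*δ ≤ kdvEt α s δ - (2*α+(α-1/2)))
    (hbig : 200*C < kdvK s δ * N^(3/2*δ)) :
    C * (2*kdvL α N*kdvGam α N) <
      kdvm α s δ N * ((2*(kdvL α N/8))*(kdvGam α N/4))^((1:ℝ)/2) := by
  have hN0 : (0:ℝ) < N := lt_of_lt_of_le one_pos hN
  have hK0 : 0 < kdvK (s := s) (δ := δ) := kdvK_pos
  have hlhs : C * (2*kdvL α N*kdvGam α N) = (200*C) * N^(2*α+(α-1/2)) := by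
    rw [kdvL, kdvGam, Real.rpow_add hN0]; ring
  have hsplit : N^(kdvEt α s δ)
      = N^(2*α+(α-1/2)) * N^(kdvEt α s δ - (2*α+(α-1/2))) := by
    rw [← Real.rpow_add hN0]; congr 1; ring
  have hmonoE : N^(3/2*δ) ≤ N^(kdvEt α s δ - (2*α+(α-1/2))) :=
    Real.rpow_le_rpow_of_exponent_le hN hE
  have hNg : (0:ℝ) < N^(2*α+(α-1/2)) := Real.rpow_pos_of_pos hN0 _
  calc C * (2*kdvL α N*kdvGam α N) = (200*C) * N^(2*α+(α-1/2)) := hlhs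
    _ < (kdvK s δ * N^(3/2*δ)) * N^(2*α+(α-1/2)) := by
        exact mul_lt_mul_of_pos_right hbig hNg
    _ ≤ (kdvK s δ * N^(kdvEt α s δ - (2*α+(α-1/2)))) * N^(2*α+(α-1/2)) :=
        mul_le_mul_of_nonneg_right (mul_le_mul_of_nonneg_left hmonoE hK0.le) hNg.le
    _ = kdvK s δ * N^(kdvEt α s δ) := by rw [hsplit]; ring
    _ = _ := (kdv_main_eq hN0).symm

end ratio

/-- Sharpness of the bilinear estimate for the KdV–Burgers equation below the critical index:
for `0 < α ≤ 1` and `s ≤ s_α`, there is `δ₀ > 0` such that for every `δ ∈ (0, δ₀)` and every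
constant `C > 0` the bilinear `L²` estimate fails for some nonnegative `F, G ∈ L²(ℝ²)`. -/
theorem kdvb_bilinear_estimate_fails (α : ℝ) (hα₁ : 0 < α) (hα₂ : α ≤ 1) (s : ℝ)
    (hs : s ≤ (if α ≤ 1 / 2 then -(3 : ℝ) / 4 else -3 / (5 - 2 * α))) :
    ∃ δ₀ > (0 : ℝ), ∀ δ ∈ Set.Ioo (0 : ℝ) δ₀, ∀ C > (0 : ℝ),
      ∃ F G : ℝ × ℝ → ℝ, Measurable F ∧ Measurable G ∧
        MemLp F 2 volume ∧ MemLp G 2 volume ∧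
        (∀ p, 0 ≤ F p) ∧ (∀ p, 0 ≤ G p) ∧
        ENNReal.ofReal C * eLpNorm F 2 volume * eLpNorm G 2 volume <
          eLpNorm (fun p : ℝ × ℝ =>
            |p.1| * jap p.1 ^ s * kdvbWeight α p.1 p.2 ^ (-(1 / 2 : ℝ) + δ) *
              ∫ q : ℝ × ℝ,
                (F q * jap q.1 ^ (-s) * kdvbWeight α q.1 q.2 ^ (-(1 / 2 : ℝ))) *
                (G (p - q) * jap (p.1 - q.1) ^ (-s) *
                  kdvbWeight α (p.1 - q.1) (p.2 - q.2) ^ (-(1 / 2 : ℝ)))) 2 volume := by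
  have hα0 : (0:ℝ) ≤ α := hα₁.le
  have hs34 : s ≤ -(3:ℝ)/4 := by
    by_cases h : α ≤ 1/2
    · rw [if_pos h] at hs; linarith
    · rw [if_neg h] at hs
      push_neg at h
      have h5 : (0:ℝ) < 5 - 2*α := by linarith
      have h2 : s * (5 - 2*α) ≤ -3 := by
        have h3 := mul_le_mul_of_nonneg_right hs h5.le
        rwa [div_mul_cancel₀ _ h5.ne'] at h3
      nlinarith
  have hsneg : s ≤ 0 := by linarith
  have hnegs : (0:ℝ) ≤ -s := by linarith
  refine ⟨1/4, by norm_num, ?_⟩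
  intro δ hδ C hC
  obtain ⟨hδ0, hδ4⟩ := hδ
  have hE : 3/2*δ ≤ kdvEt α s δ - (2*α+(α-1/2)) := by
    rw [kdvEt]
    by_cases h : α ≤ 1/2
    · rw [max_eq_right (show α - 1/2 ≤ (0:ℝ) by linarith)]
      rw [if_pos h] at hs
      nlinarith [mul_nonneg hα0 hδ0.le]
    · have h' : (1:ℝ)/2 < α := not_le.mp h
      rw [max_eq_left (show (0:ℝ) ≤ α - 1/2 by linarith)]
      rw [if_neg h] at hs
      have h5 : (0:ℝ) < 5 - 2*α := by linarith
      have h2 : s * (5 - 2*α) ≤ -3 := by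
        have h3 := mul_le_mul_of_nonneg_right hs h5.le
        rwa [div_mul_cancel₀ _ h5.ne'] at h3
      nlinarith [mul_nonneg hα0 hδ0.le]
  have hK0 : 0 < kdvK s δ := kdvK_pos
  set N : ℝ := max 1 ((200*C/kdvK s δ + 1)^((2:ℝ)/(3*δ))) with hN
  have hN1 : (1:ℝ) ≤ N := le_max_left _ _
  have hN0 : (0:ℝ) < N := lt_of_lt_of_le one_pos hN1
  have hNbig : 200*C < kdvK s δ * N^(3/2*δ) := by
    have hX0 : (0:ℝ) ≤ 200*C/kdvK s δ + 1 := by positivity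
    have hXN : (200*C/kdvK s δ + 1)^((2:ℝ)/(3*δ)) ≤ N := le_max_right _ _
    have h1 : ((200*C/kdvK s δ + 1)^((2:ℝ)/(3*δ)))^(3/2*δ) ≤ N^(3/2*δ) :=
      Real.rpow_le_rpow (Real.rpow_nonneg hX0 _) hXN (by positivity)
    rw [← Real.rpow_mul hX0] at h1
    have hexp : (2:ℝ)/(3*δ) * (3/2*δ) = 1 := by field_simp
    rw [hexp, Real.rpow_one] at h1
    have h4 := mul_le_mul_of_nonneg_left h1 hK0.le
    have hcan : kdvK s δ * (200*C/kdvK s δ + 1) = 200*C + kdvK s δ := by field_simp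
    nlinarith
  have hγ := kdvGam_pos (α := α) hN0
  have hL := kdvL_pos (α := α) hN0
  have hm0 : 0 < kdvm α s δ N := kdvm_pos hN0 hα₁
  refine ⟨kdvF α N, kdvG α N, kdvF_meas, kdvG_meas, kdvF_mem hN0, kdvG_mem hN0,
    kdvF_nonneg, kdvG_nonneg, ?_⟩
  rw [kdv_eLpNorm_F hN0, kdv_eLpNorm_G hN0]
  apply lt_of_lt_of_le _ (kdv_eLpNorm_ge hα₁ hα₂ hN1 hnegs hsneg hδ0 hδ4)
  -- collapse the left-hand side
  have hV0 : (ENNReal.ofReal (2*kdvL α N) * ENNReal.ofReal (kdvGam α N)) ≠ 0 := by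
    rw [← ENNReal.ofReal_mul (by positivity)]
    simp only [ne_eq, ENNReal.ofReal_eq_zero, not_le]
    positivity
  have hVtop : (ENNReal.ofReal (2*kdvL α N) * ENNReal.ofReal (kdvGam α N)) ≠ ⊤ :=
    (ENNReal.mul_lt_top ENNReal.ofReal_lt_top ENNReal.ofReal_lt_top).ne
  have hVV : (ENNReal.ofReal (2*kdvL α N) * ENNReal.ofReal (kdvGam α N)) ^ ((1:ℝ)/2) *
      (ENNReal.ofReal (2*kdvL α N) * ENNReal.ofReal (kdvGam α N)) ^ ((1:ℝ)/2) =
      ENNReal.ofReal (2*kdvL α N) * ENNReal.ofReal (kdvGam α N) := by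
    rw [← ENNReal.rpow_add _ _ hV0 hVtop]
    norm_num
  rw [mul_assoc, hVV, ← ENNReal.ofReal_mul (by positivity : (0:ℝ) ≤ 2*kdvL α N),
    ← ENNReal.ofReal_mul hC.le]
  -- rewrite the right-hand side as ofReal
  rw [← ENNReal.ofReal_mul (by positivity : (0:ℝ) ≤ 2*(kdvL α N/8)),
    ENNReal.ofReal_rpow_of_pos (by positivity),
    ← ENNReal.ofReal_mul hm0.le]
  rw [ENNReal.ofReal_lt_ofReal_iff (by
    have h1 : (0:ℝ) < (2*(kdvL α N/8)*(kdvGam α N/4))^((1:ℝ)/2) :=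
      Real.rpow_pos_of_pos (by positivity) _
    positivity)]
  exact kdv_ratio hN1 hC hE hNbig
end

section
/- Let k ∈ ℕ and let a₁,…,a_k and b₁,…,b_k be nonnegative real numbers. Let A₁ ≤ A₂ ≤ … ≤ A_k be a nondecreasing rearrangement of (a₁,…,a_k) (i.e. A_i = a_{σ(i)} for some permutation σ of {1,…,k}) and let B₁ ≤ B₂ ≤ … ≤ B_k be a nondecreasing rearrangement of (b₁,…,b_k). Then ∏_{i=1}^k (a_i + b_i) ≥ ∏_{i=1}^k (A_i + B_i). -/
open Finset

private lemma key_prod {x X y Y : ℝ} (hx : 0 ≤ x) (hy : 0 ≤ y) (hxX : x ≤ X) (hyY : y ≤ Y) :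
    (x + y) * (X + Y) ≤ (x + Y) * (X + y) := by nlinarith

private lemma fin_le_apply {k : ℕ} {f : Fin k → Fin k} (hf : StrictMono f) :
    ∀ (n : ℕ) (i : Fin k), i.val ≤ n → i ≤ f i := by
  intro n
  induction n with
  | zero =>
    intro i hi
    have : (i : ℕ) ≤ ((f i : Fin k) : ℕ) := by omega
    exact this
  | succ n ih =>
    intro i hi
    by_contra h
    push_neg at h
    have h2 : f (f i) < f i := hf h
    have h3 : f i ≤ f (f i) := ih (f i) (by have := Fin.lt_def.mp h; omega)
    exact absurd (lt_of_le_of_lt h3 h2) (lt_irrefl _)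

private lemma perm_eq_id_of_monotone {k : ℕ} (π : Equiv.Perm (Fin k))
    (h : Monotone (π : Fin k → Fin k)) : ∀ i, π i = i := by
  have hs : StrictMono (π : Fin k → Fin k) := h.strictMono_of_injective π.injective
  have hs' : StrictMono ((π⁻¹ : Equiv.Perm (Fin k)) : Fin k → Fin k) := by
    intro i j hij
    by_contra hle
    push_neg at hle
    have := hs.monotone hle
    simp at this
    omega
  intro i
  have h1 : i ≤ π i := fin_le_apply hs i.val i le_rfl
  have h2 : π i ≤ (π⁻¹ : Equiv.Perm (Fin k)) (π i) := fin_le_apply hs' (π i).val _ le_rfl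
  simp at h2
  exact le_antisymm h2 h1

private def invs {k : ℕ} (π : Equiv.Perm (Fin k)) : Finset (Fin k × Fin k) :=
  Finset.univ.filter fun p => p.1 < p.2 ∧ π p.2 < π p.1

private lemma core {k : ℕ} (A B : Fin k → ℝ) (hA0 : ∀ i, 0 ≤ A i) (hB0 : ∀ i, 0 ≤ B i)
    (hA : Monotone A) (hB : Monotone B) (π : Equiv.Perm (Fin k)) :
    ∏ i, (A i + B i) ≤ ∏ i, (A i + B (π i)) := by
  generalize hn : (invs π).card = n
  induction n using Nat.strong_induction_on generalizing π with
  | _ n ih =>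
  by_cases hmono : Monotone (π : Fin k → Fin k)
  · have := perm_eq_id_of_monotone π hmono
    simp [this]
  · obtain ⟨m, rfl⟩ : ∃ m, k = m + 1 := by
      cases k with
      | zero => exact absurd (fun i j _ => by omega) hmono
      | succ m => exact ⟨m, rfl⟩
    rw [Fin.monotone_iff_le_succ] at hmono
    push_neg at hmono
    obtain ⟨i, hi⟩ := hmono
    set c := i.castSucc with hc
    set d := i.succ with hd
    have hcd : c < d := Fin.castSucc_lt_succ (i := i)
    have hdc : d ≠ c := hcd.ne'
    have hcdv : (c : ℕ) + 1 = (d : ℕ) := by simp [hc, hd]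
    set s : Equiv.Perm (Fin (m + 1)) := Equiv.swap c d with hs
    -- membership of (c, d) in invs π
    have hmem : (c, d) ∈ invs π := by
      simp [invs, hcd, hi]
    -- the swapped permutation has strictly fewer inversions
    have hmaps : ∀ p ∈ invs (π * s), (s p.1, s p.2) ∈ (invs π).erase (c, d) := by
      rintro ⟨p₁, p₂⟩ hp
      rw [invs, Finset.mem_filter] at hp
      simp only [Finset.mem_univ, true_and,
        Equiv.Perm.mul_apply] at hp
      obtain ⟨hplt, hπlt⟩ := hp
      have hne : ¬(p₁ = c ∧ p₂ = d) := by
        rintro ⟨rfl, rfl⟩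
        simp [hs, Equiv.swap_apply_left, Equiv.swap_apply_right] at hπlt
        exact absurd hπlt hi.asymm
      have hslt : s p₁ < s p₂ := by
        have e1 : ∀ x : Fin (m + 1), (s x : ℕ) =
            if (x : ℕ) = (c : ℕ) then (d : ℕ) else if (x : ℕ) = (d : ℕ) then (c : ℕ)
            else (x : ℕ) := by
          intro x
          rcases eq_or_ne x c with rfl | hxc
          · simp [hs, Equiv.swap_apply_left]
          · rcases eq_or_ne x d with rfl | hxd
            · simp only [hs, Equiv.swap_apply_right]
              rw [if_neg (by omega)]; simp
            · have h1 : (x : ℕ) ≠ (c : ℕ) := fun h => hxc (Fin.ext h)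
              simp only [hs, Equiv.swap_apply_of_ne_of_ne hxc hxd]
              rw [if_neg h1, if_neg (fun h => hxd (Fin.ext h))]
        have hnev : ¬((p₁ : ℕ) = (c : ℕ) ∧ (p₂ : ℕ) = (d : ℕ)) := by
          rintro ⟨u1, u2⟩
          exact hne ⟨Fin.ext u1, Fin.ext u2⟩
        have hp12 : (p₁ : ℕ) < (p₂ : ℕ) := hplt
        rw [Fin.lt_def, e1 p₁, e1 p₂]
        split_ifs <;> omega
      refine Finset.mem_erase.mpr ⟨?_, ?_⟩
      · intro h
        have h1 : s p₁ = c := congrArg Prod.fst h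
        have h2 : s p₂ = d := congrArg Prod.snd h
        have hp1 : p₁ = d := by
          have := congrArg s h1; simpa [hs] using this
        have hp2 : p₂ = c := by
          have := congrArg s h2; simpa [hs] using this
        rw [hp1, hp2] at hplt
        exact absurd hcd (asymm hplt)
      · simp only [invs, Finset.mem_filter, Finset.mem_univ, true_and]
        exact ⟨hslt, hπlt⟩
    have hinj : Set.InjOn (fun p : Fin (m+1) × Fin (m+1) => (s p.1, s p.2)) (invs (π * s)) := by
      rintro ⟨p₁, p₂⟩ _ ⟨q₁, q₂⟩ _ h
      have h1 : s p₁ = s q₁ := congrArg Prod.fst h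
      have h2 : s p₂ = s q₂ := congrArg Prod.snd h
      exact Prod.ext (s.injective h1) (s.injective h2)
    have hcard : (invs (π * s)).card < (invs π).card := by
      have h1 : (invs (π * s)).card ≤ ((invs π).erase (c, d)).card :=
        Finset.card_le_card_of_injOn _ hmaps hinj
      have h2 : ((invs π).erase (c, d)).card = (invs π).card - 1 :=
        Finset.card_erase_of_mem hmem
      have h3 : 0 < (invs π).card := Finset.card_pos.mpr ⟨_, hmem⟩
      omega
    -- product comparison between π and π * s
    have hπdc : π d < π c := hi
    have hprod : ∏ j, (A j + B ((π * s) j)) ≤ ∏ j, (A j + B (π j)) := by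
      have hdmem : d ∈ Finset.univ.erase c := Finset.mem_erase.mpr ⟨hdc, Finset.mem_univ d⟩
      rw [← Finset.mul_prod_erase Finset.univ _ (Finset.mem_univ c),
        ← Finset.mul_prod_erase _ _ hdmem,
        ← Finset.mul_prod_erase Finset.univ (fun j => A j + B (π j)) (Finset.mem_univ c),
        ← Finset.mul_prod_erase _ (fun j => A j + B (π j)) hdmem]
      have hrest : ∏ j ∈ (Finset.univ.erase c).erase d, (A j + B ((π * s) j)) =
          ∏ j ∈ (Finset.univ.erase c).erase d, (A j + B (π j)) := by
        refine Finset.prod_congr rfl fun j hj => ?_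
        have hjd : j ≠ d := (Finset.mem_erase.mp hj).1
        have hjc : j ≠ c := (Finset.mem_erase.mp (Finset.mem_erase.mp hj).2).1
        simp [hs, Equiv.swap_apply_of_ne_of_ne hjc hjd]
      rw [hrest, ← mul_assoc, ← mul_assoc]
      have hrest0 : 0 ≤ ∏ j ∈ (Finset.univ.erase c).erase d, (A j + B (π j)) :=
        Finset.prod_nonneg fun j _ => add_nonneg (hA0 j) (hB0 (π j))
      refine mul_le_mul_of_nonneg_right ?_ hrest0
      have h1 : (π * s) c = π d := by simp [hs, Equiv.swap_apply_left]
      have h2 : (π * s) d = π c := by simp [hs, Equiv.swap_apply_right]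
      rw [h1, h2]
      exact key_prod (hA0 c) (hB0 (π d)) (hA hcd.le) (hB hπdc.le)
    calc ∏ i, (A i + B i) ≤ ∏ j, (A j + B ((π * s) j)) := by
          exact ih _ (hn ▸ hcard) (π * s) rfl
      _ ≤ ∏ j, (A j + B (π j)) := hprod

/-- Rearrangement inequality for products of sums: if `A_i = a (σ i)` (resp. `B_i = b (τ i)`)
is a nondecreasing rearrangement of the nonnegative family `a` (resp. `b`), then
`∏ (aᵢ + bᵢ) ≥ ∏ (Aᵢ + Bᵢ)`. -/
theorem prod_add_ge_prod_monotone_rearrangement (k : ℕ)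
    (a b : Fin k → ℝ) (ha : ∀ i, 0 ≤ a i) (hb : ∀ i, 0 ≤ b i)
    (σ τ : Equiv.Perm (Fin k))
    (hA : Monotone fun i => a (σ i)) (hB : Monotone fun i => b (τ i)) :
    ∏ i, (a (σ i) + b (τ i)) ≤ ∏ i, (a i + b i) := by
  have h := core (fun i => a (σ i)) (fun i => b (τ i)) (fun i => ha _) (fun i => hb _)
    hA hB (τ⁻¹ * σ)
  calc ∏ i, (a (σ i) + b (τ i)) ≤ ∏ i, (a (σ i) + b (τ ((τ⁻¹ * σ) i))) := h
    _ = ∏ i, (a (σ i) + b (σ i)) := by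
        refine Finset.prod_congr rfl fun i _ => ?_
        simp
    _ = ∏ i, (a i + b i) := Equiv.prod_comp σ fun i => a i + b i
end

section
/- There is an absolute constant C > 0 such that for every integer k ≥ 10 and all functions u, v ∈ L²(ℝ), g ∈ L²(ℝ²), where u is supported in {ξ : |ξ| ≤ 2} and v is supported in {ξ : 2^{k-1} ≤ |ξ| ≤ 2^{k+1}}, one has | ∬_{ℝ²} u(ξ₁) v(ξ₂) g( ξ₁+ξ₂, -3 ξ₁ ξ₂ (ξ₁+ξ₂) ) dξ₁ dξ₂ | ≤ C 2^{-k} ‖u‖_{L²(ℝ)} ‖v‖_{L²(ℝ)} ‖g‖_{L²(ℝ²)}. -/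
open MeasureTheory Set ENNReal

noncomputable def Lmap (c d : ℝ) : ℝ × ℝ →L[ℝ] ℝ × ℝ :=
  ((ContinuousLinearMap.fst ℝ ℝ ℝ) + (ContinuousLinearMap.snd ℝ ℝ ℝ)).prod
  (c • ContinuousLinearMap.fst ℝ ℝ ℝ + d • ContinuousLinearMap.snd ℝ ℝ ℝ)

lemma Lmap_det (c d : ℝ) : (Lmap c d).det = d - c := by
  rw [ContinuousLinearMap.det, ← LinearMap.det_toMatrix (Module.Basis.finTwoProd ℝ),
    Matrix.det_fin_two]
  simp [LinearMap.toMatrix_apply, Lmap, Module.Basis.finTwoProd]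

def Phi : ℝ × ℝ → ℝ × ℝ := fun p => (p.1 + p.2, -3 * p.1 * p.2 * (p.1 + p.2))

lemma hasFDerivAt_Phi (p : ℝ × ℝ) :
    HasFDerivAt Phi (Lmap (-3 * p.2 * (2 * p.1 + p.2)) (-3 * p.1 * (p.1 + 2 * p.2))) p := by
  have hx : HasFDerivAt (fun q : ℝ × ℝ => q.1) (ContinuousLinearMap.fst ℝ ℝ ℝ) p :=
    hasFDerivAt_fst
  have hy : HasFDerivAt (fun q : ℝ × ℝ => q.2) (ContinuousLinearMap.snd ℝ ℝ ℝ) p :=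
    hasFDerivAt_snd
  have h1 := hx.add hy
  have H := (h1.prodMk (((hx.const_mul (-3 : ℝ)).mul hy).mul h1))
  refine H.congr_fderiv ?_
  refine ContinuousLinearMap.ext fun q => ?_
  refine Prod.ext ?_ ?_ <;>
    simp [Lmap, ContinuousLinearMap.prod_apply, smul_eq_mul] <;> ring

def Sk (k : ℕ) : Set (ℝ × ℝ) :=
  {p : ℝ × ℝ | |p.1| ≤ 2 ∧ (2 : ℝ) ^ (k - 1) ≤ |p.2| ∧ |p.2| ≤ (2 : ℝ) ^ (k + 1)}

lemma measurableSet_Sk (k : ℕ) : MeasurableSet (Sk k) := by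
  have h1 : Sk k = (fun p : ℝ × ℝ => |p.1|) ⁻¹' (Set.Iic 2) ∩
      ((fun p : ℝ × ℝ => |p.2|) ⁻¹' (Set.Ici ((2:ℝ) ^ (k-1))) ∩
       (fun p : ℝ × ℝ => |p.2|) ⁻¹' (Set.Iic ((2:ℝ) ^ (k+1)))) := by
    ext p; simp [Sk, and_assoc]
  rw [h1]
  have m1 : Measurable fun p : ℝ × ℝ => |p.1| := continuous_fst.abs.measurable
  have m2 : Measurable fun p : ℝ × ℝ => |p.2| := continuous_snd.abs.measurable
  exact (m1 measurableSet_Iic).inter ((m2 measurableSet_Ici).inter (m2 measurableSet_Iic))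

lemma two_lt_pow {k : ℕ} (hk : 10 ≤ k) : (2 : ℝ) < 2 ^ (k - 1) := by
  calc (2:ℝ) < 2 ^ 2 := by norm_num
  _ ≤ 2 ^ (k - 1) := by
      apply pow_le_pow_right₀ (by norm_num) (by omega)

lemma injOn_Phi {k : ℕ} (hk : 10 ≤ k) : InjOn Phi (Sk k) := by
  rintro ⟨x, y⟩ ⟨hx, hy, -⟩ ⟨x', y'⟩ ⟨hx', hy', -⟩ heq
  have h2k := two_lt_pow hk
  simp only [Phi, Prod.mk.injEq] at heq
  obtain ⟨hsum, hprod⟩ := heq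
  have hs : x + y ≠ 0 := by
    intro h0
    have : |y| = |x| := by rw [abs_eq_abs]; right; linarith
    have : |y| ≤ 2 := this ▸ hx
    linarith
  have hxy : x * y = x' * y' := by
    have h3 : (-3 * (x * y)) * (x + y) = (-3 * (x' * y')) * (x + y) := by
      rw [hsum] at hprod ⊢
      linear_combination hprod
    have := mul_right_cancel₀ hs h3
    linarith
  have hfac : (x - x') * (x - y') = 0 := by linear_combination x * hsum - hxy
  rcases mul_eq_zero.1 hfac with h | h
  · have hxx : x = x' := by linarith
    have : y = y' := by linarith [hsum]
    simp [hxx, this]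
  · exfalso
    have : x = y' := by linarith
    rw [← this] at hy'
    linarith

lemma det_lower {k : ℕ} (hk : 10 ≤ k) {p : ℝ × ℝ} (hp : p ∈ Sk k) :
    (2 : ℝ) ^ (2 * k - 4) ≤
      |(Lmap (-3 * p.2 * (2 * p.1 + p.2)) (-3 * p.1 * (p.1 + 2 * p.2))).det| := by
  obtain ⟨hx, hy, -⟩ := hp
  rw [Lmap_det]
  have hy2 : ((2:ℝ) ^ (k - 1)) ^ 2 ≤ p.2 ^ 2 := by
    rw [← sq_abs p.2]
    exact pow_le_pow_left₀ (by positivity) hy 2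
  have hx2 : p.1 ^ 2 ≤ 4 := by
    rw [← sq_abs p.1]; nlinarith [abs_nonneg p.1]
  have e1 : ((2:ℝ) ^ (k - 1)) ^ 2 = 2 ^ (2 * k - 4) * 4 := by
    rw [← pow_mul, show (2:ℝ)^(2*k-4) * 4 = 2^(2*k-4) * 2^2 by norm_num, ← pow_add]
    congr 1
    omega
  have e2 : (2:ℝ) ≤ 2 ^ (2 * k - 4) := by
    calc (2:ℝ) = 2 ^ 1 := (pow_one 2).symm
    _ ≤ _ := pow_le_pow_right₀ (by norm_num) (by omega)
  have hval : (2:ℝ) ^ (2*k-4) ≤ -3 * p.1 * (p.1 + 2 * p.2) - -3 * p.2 * (2 * p.1 + p.2) := by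
    nlinarith
  exact hval.trans (le_abs_self _)

lemma keyCoV {k : ℕ} (hk : 10 ≤ k) (G : ℝ × ℝ → ℝ≥0∞) (hG : Measurable G) :
    (2 : ℝ≥0∞) ^ (2 * k - 4) * ∫⁻ p in Sk k, G (Phi p) ≤ ∫⁻ q, G q := by
  set f' : ℝ × ℝ → (ℝ × ℝ →L[ℝ] ℝ × ℝ) :=
    fun p => Lmap (-3 * p.2 * (2 * p.1 + p.2)) (-3 * p.1 * (p.1 + 2 * p.2)) with hf'
  have hderiv : ∀ p ∈ Sk k, HasFDerivWithinAt Phi (f' p) (Sk k) p :=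
    fun p _ => (hasFDerivAt_Phi p).hasFDerivWithinAt
  have hCoV := lintegral_image_eq_lintegral_abs_det_fderiv_mul volume (measurableSet_Sk k)
    hderiv (injOn_Phi hk) G
  have step1 : (2 : ℝ≥0∞) ^ (2 * k - 4) * ∫⁻ p in Sk k, G (Phi p) ≤
      ∫⁻ p in Sk k, ENNReal.ofReal |(f' p).det| * G (Phi p) := by
    have hPhi : Measurable Phi := by
      have : Continuous Phi := by unfold Phi; fun_prop
      exact this.measurable
    rw [← lintegral_const_mul _ (show Measurable fun p => G (Phi p) from hG.comp hPhi)]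
    have e : ∀ p : ℝ × ℝ, (f' p).det = -3 * p.1 * (p.1 + 2 * p.2) - -3 * p.2 * (2 * p.1 + p.2) :=
      fun p => Lmap_det _ _
    have hc : Continuous fun p : ℝ × ℝ => -3 * p.1 * (p.1 + 2 * p.2) - -3 * p.2 * (2 * p.1 + p.2) := by
      fun_prop
    have hdm : Measurable fun p : ℝ × ℝ => ENNReal.ofReal |(f' p).det| * G (Phi p) := by
      simp_rw [e]
      exact (hc.abs.measurable.ennreal_ofReal).mul (hG.comp hPhi)
    refine setLIntegral_mono hdm (fun p hp => ?_)
    gcongr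
    have := det_lower hk hp
    calc (2:ℝ≥0∞) ^ (2*k-4) = ENNReal.ofReal ((2:ℝ) ^ (2*k-4)) := by
          rw [ENNReal.ofReal_pow (by norm_num)]; norm_num
    _ ≤ _ := ENNReal.ofReal_le_ofReal this
  calc (2 : ℝ≥0∞) ^ (2 * k - 4) * ∫⁻ p in Sk k, G (Phi p) ≤ _ := step1
  _ = ∫⁻ q in Phi '' Sk k, G q := hCoV.symm
  _ ≤ ∫⁻ q, G q := setLIntegral_le_lintegral _ _

lemma measurable_Phi : Measurable Phi := by
  have : Continuous Phi := by unfold Phi; fun_prop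
  exact this.measurable

lemma phi_preimage_null {k : ℕ} (hk : 10 ≤ k) {N : Set (ℝ × ℝ)} (hN : volume N = 0) :
    volume (Phi ⁻¹' N ∩ Sk k) = 0 := by
  obtain ⟨N', hNN', hN'm, hN'0⟩ := exists_measurable_superset_of_null hN
  have hG : Measurable (N'.indicator (fun _ => (1 : ℝ≥0∞))) := measurable_const.indicator hN'm
  have h := keyCoV hk _ hG
  rw [lintegral_indicator_const hN'm, hN'0, mul_zero] at h
  have hswap : ∀ p : ℝ × ℝ, N'.indicator (fun _ => (1 : ℝ≥0∞)) (Phi p) =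
      (Phi ⁻¹' N').indicator (fun _ => (1 : ℝ≥0∞)) p := by
    intro p
    by_cases hp : Phi p ∈ N' <;> simp [Set.indicator_apply, hp]
  simp_rw [hswap] at h
  rw [lintegral_indicator_const (measurable_Phi hN'm)] at h
  simp only [one_mul] at h
  have h0 : (volume.restrict (Sk k)) (Phi ⁻¹' N') = 0 := by
    have hne : (2 : ℝ≥0∞) ^ (2 * k - 4) ≠ 0 := by positivity
    have := le_antisymm h zero_le
    rcases mul_eq_zero.1 this with h' | h'
    · exact absurd h' hne
    · exact h'
  rw [Measure.restrict_apply (measurable_Phi hN'm)] at h0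
  exact measure_mono_null (Set.inter_subset_inter_left _ (Set.preimage_mono hNN')) h0

lemma eLp_sq {f : ℝ × ℝ → ℂ} :
    (∫⁻ x, (‖f x‖₊ : ℝ≥0∞) ^ (2 : ℝ)) ^ (1 / 2 : ℝ) = eLpNorm f 2 volume := by
  rw [eLpNorm_eq_lintegral_rpow_enorm_toReal two_ne_zero ENNReal.ofNat_ne_top]
  norm_num
  rfl

lemma eLp_sq1 {f : ℝ → ℂ} :
    (∫⁻ x, (‖f x‖₊ : ℝ≥0∞) ^ (2 : ℝ)) ^ (1 / 2 : ℝ) = eLpNorm f 2 volume := by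
  rw [eLpNorm_eq_lintegral_rpow_enorm_toReal two_ne_zero ENNReal.ofNat_ne_top]
  norm_num
  rfl

/-- Bilinear estimate on the resonance surface of the Airy symbol (low×high → high
interaction): pairing `g ∈ L²(ℝ²)` along the surface `(ξ₁+ξ₂, -3ξ₁ξ₂(ξ₁+ξ₂))` against
`u` supported at frequencies `|ξ| ≤ 2` and `v` supported at `|ξ| ∼ 2^k` gains `2^{-k}`. -/
theorem airy_resonance_surface_bilinear :
    ∃ C > (0 : ℝ), ∀ k : ℕ, 10 ≤ k →
      ∀ (u v : ℝ → ℂ) (g : ℝ × ℝ → ℂ),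
        MemLp u 2 volume → MemLp v 2 volume → MemLp g 2 volume →
        (∀ ξ : ℝ, u ξ ≠ 0 → |ξ| ≤ 2) →
        (∀ ξ : ℝ, v ξ ≠ 0 → (2 : ℝ) ^ (k - 1) ≤ |ξ| ∧ |ξ| ≤ (2 : ℝ) ^ (k + 1)) →
        ENNReal.ofReal
            ‖∫ ξ₁ : ℝ, ∫ ξ₂ : ℝ, u ξ₁ * v ξ₂ * g (ξ₁ + ξ₂, -3 * ξ₁ * ξ₂ * (ξ₁ + ξ₂))‖ ≤
          ENNReal.ofReal (C * (2 : ℝ) ^ (-(k : ℝ))) *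
            eLpNorm u 2 volume * eLpNorm v 2 volume * eLpNorm g 2 volume := by
  refine ⟨4, by norm_num, ?_⟩
  intro k hk u v g hmu hmv hmg hu hv
  have hSm := measurableSet_Sk k
  set D : ℝ≥0∞ := ENNReal.ofReal (4 * (2 : ℝ) ^ (-(k : ℝ))) with hD
  obtain ⟨u', hu'sm, huu'⟩ := hmu.1
  obtain ⟨v', hv'sm, hvv'⟩ := hmv.1
  obtain ⟨g', hg'sm, hgg'⟩ := hmg.1
  set F : ℝ × ℝ → ℂ := fun p => u p.1 * v p.2 * g (Phi p) with hF
  set F' : ℝ × ℝ → ℂ :=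
    (Sk k).indicator (fun p => u' p.1 * v' p.2 * g' (Phi p)) with hF'
  -- F = F' a.e.
  have hNu : volume {x : ℝ | ¬ u x = u' x} = 0 := ae_iff.1 huu'
  have hNv : volume {x : ℝ | ¬ v x = v' x} = 0 := ae_iff.1 hvv'
  have hNg : volume {q : ℝ × ℝ | ¬ g q = g' q} = 0 := ae_iff.1 hgg'
  set Z : Set (ℝ × ℝ) :=
    ({x : ℝ | ¬ u x = u' x} ×ˢ (Set.univ : Set ℝ)) ∪
    ((Set.univ : Set ℝ) ×ˢ {y : ℝ | ¬ v y = v' y}) ∪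
    (Phi ⁻¹' {q : ℝ × ℝ | ¬ g q = g' q} ∩ Sk k) with hZdef
  have hZ : volume Z = 0 := by
    refine measure_union_null (measure_union_null ?_ ?_) (phi_preimage_null hk hNg)
    · rw [Measure.volume_eq_prod ℝ ℝ, Measure.prod_prod, hNu, zero_mul]
    · rw [Measure.volume_eq_prod ℝ ℝ, Measure.prod_prod, hNv, mul_zero]
  have hsub : {p : ℝ × ℝ | ¬ F p = F' p} ⊆ Z := by
    intro p hp
    by_contra hpZ
    apply hp
    simp only [hZdef, Set.mem_union, not_or] at hpZ
    obtain ⟨⟨hp1, hp2⟩, hp3⟩ := hpZ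
    have hu' : u p.1 = u' p.1 := by
      by_contra h
      exact hp1 (Set.mem_prod.2 ⟨h, Set.mem_univ _⟩)
    have hv' : v p.2 = v' p.2 := by
      by_contra h
      exact hp2 (Set.mem_prod.2 ⟨Set.mem_univ _, h⟩)
    by_cases hpS : p ∈ Sk k
    · have hg' : g (Phi p) = g' (Phi p) := by
        by_contra h
        exact hp3 ⟨h, hpS⟩
      simp only [hF, hF', Set.indicator_of_mem hpS]
      rw [hu', hv', hg']
    · have h0 : u p.1 * v p.2 = 0 := by
        by_cases h1 : u p.1 = 0
        · rw [h1, zero_mul]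
        by_cases h2 : v p.2 = 0
        · rw [h2, mul_zero]
        exact absurd ⟨hu p.1 h1, hv p.2 h2⟩ hpS
      simp only [hF, hF', Set.indicator_of_notMem hpS]
      rw [h0, zero_mul]
  have hFae : F =ᵐ[volume] F' := ae_iff.2 (measure_mono_null hsub hZ)
  have hF'sm : StronglyMeasurable F' :=
    (((hu'sm.comp_measurable measurable_fst).mul
      (hv'sm.comp_measurable measurable_snd)).mul
      (hg'sm.comp_measurable measurable_Phi)).indicator hSm
  have hFaesm : AEStronglyMeasurable F volume := ⟨F', hF'sm, hFae⟩
  -- pointwise factorization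
  set H : ℝ × ℝ → ℝ≥0∞ := fun p => (‖u' p.1‖₊ : ℝ≥0∞) * (‖v' p.2‖₊ : ℝ≥0∞) with hHdef
  set K : ℝ × ℝ → ℝ≥0∞ :=
    (Sk k).indicator (fun p => (‖g' (Phi p)‖₊ : ℝ≥0∞)) with hKdef
  have hHK : ∀ p, (‖F' p‖₊ : ℝ≥0∞) = H p * K p := by
    intro p
    by_cases hp : p ∈ Sk k
    · simp only [hF', hHdef, hKdef, Set.indicator_of_mem hp]
      push_cast [nnnorm_mul]
      ring
    · simp [hF', hHdef, hKdef, Set.indicator_of_notMem hp]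
  have hlint_eq : ∫⁻ p, (‖F p‖₊ : ℝ≥0∞) = ∫⁻ p, H p * K p := by
    refine lintegral_congr_ae (hFae.mono fun p hp => ?_)
    simp only []
    rw [hp]
    exact hHK p
  -- measurability of H and K
  have hHm : Measurable H :=
    ((hu'sm.measurable.nnnorm.comp measurable_fst).coe_nnreal_ennreal).mul
      ((hv'sm.measurable.nnnorm.comp measurable_snd).coe_nnreal_ennreal)
  have hKm : Measurable K :=
    (((hg'sm.measurable.comp measurable_Phi).nnnorm).coe_nnreal_ennreal).indicator hSm
  -- Hölder
  have hconj : Real.HolderConjugate 2 2 := Real.HolderConjugate.two_two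
  have holder := ENNReal.lintegral_mul_le_Lp_mul_Lq volume hconj hHm.aemeasurable hKm.aemeasurable
  simp only [Pi.mul_apply] at holder
  -- compute ∫⁻ H ^ 2
  have hHsq : (∫⁻ p, H p ^ (2 : ℝ)) ^ (1 / 2 : ℝ) =
      eLpNorm u 2 volume * eLpNorm v 2 volume := by
    have e1 : ∀ p : ℝ × ℝ, H p ^ (2 : ℝ) =
        (‖u' p.1‖₊ : ℝ≥0∞) ^ (2 : ℝ) * (‖v' p.2‖₊ : ℝ≥0∞) ^ (2 : ℝ) :=
      fun p => ENNReal.mul_rpow_of_nonneg _ _ (by norm_num)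
    simp_rw [e1]
    rw [show (volume : Measure (ℝ × ℝ)) = (volume : Measure ℝ).prod volume from
      Measure.volume_eq_prod ℝ ℝ]
    have hmu2 : AEMeasurable (fun x : ℝ => (‖u' x‖₊ : ℝ≥0∞) ^ (2 : ℝ)) volume := by
      apply Measurable.aemeasurable
      have := (hu'sm.measurable.nnnorm.coe_nnreal_ennreal).pow_const (2 : ℕ)
      simpa [ENNReal.rpow_two] using this
    have hmv2 : AEMeasurable (fun y : ℝ => (‖v' y‖₊ : ℝ≥0∞) ^ (2 : ℝ)) volume := by
      apply Measurable.aemeasurable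
      have := (hv'sm.measurable.nnnorm.coe_nnreal_ennreal).pow_const (2 : ℕ)
      simpa [ENNReal.rpow_two] using this
    rw [lintegral_prod_mul hmu2 hmv2]
    rw [ENNReal.mul_rpow_of_nonneg _ _ (by norm_num : (0:ℝ) ≤ 1/2), eLp_sq1, eLp_sq1,
      eLpNorm_congr_ae huu'.symm, eLpNorm_congr_ae hvv'.symm]
  -- estimate ∫⁻ K ^ 2
  have hKsq : (∫⁻ p, K p ^ (2 : ℝ)) ^ (1 / 2 : ℝ) ≤ D * eLpNorm g 2 volume := by
    have e2 : ∀ p, K p ^ (2 : ℝ) =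
        (Sk k).indicator (fun p => (‖g' (Phi p)‖₊ : ℝ≥0∞) ^ (2 : ℝ)) p := by
      intro p
      by_cases hp : p ∈ Sk k
      · simp [hKdef, Set.indicator_of_mem hp]
      · simp [hKdef, Set.indicator_of_notMem hp,
          ENNReal.zero_rpow_of_pos (by norm_num : (0:ℝ) < 2)]
    have hGm : Measurable fun q : ℝ × ℝ => (‖g' q‖₊ : ℝ≥0∞) ^ (2 : ℝ) := by
      have : Measurable fun q : ℝ × ℝ => ((‖g' q‖₊ : ℝ≥0∞)) ^ (2 : ℕ) :=
        (hg'sm.measurable.nnnorm.coe_nnreal_ennreal).pow_const 2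
      simpa [ENNReal.rpow_two] using this
    have hcov := keyCoV hk _ hGm
    set c : ℝ≥0∞ := (2 : ℝ≥0∞) ^ (2 * k - 4) with hc
    have hc0 : c ≠ 0 := by positivity
    have hctop : c ≠ ⊤ := by
      rw [hc]
      exact ENNReal.pow_ne_top ENNReal.ofNat_ne_top
    have hXle : ∫⁻ p in Sk k, (‖g' (Phi p)‖₊ : ℝ≥0∞) ^ (2 : ℝ) ≤
        c⁻¹ * ∫⁻ q, (‖g' q‖₊ : ℝ≥0∞) ^ (2 : ℝ) := by
      have hcc : c⁻¹ * (c * ∫⁻ p in Sk k, (‖g' (Phi p)‖₊ : ℝ≥0∞) ^ (2 : ℝ)) =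
          ∫⁻ p in Sk k, (‖g' (Phi p)‖₊ : ℝ≥0∞) ^ (2 : ℝ) := by
        rw [← mul_assoc, ENNReal.inv_mul_cancel hc0 hctop, one_mul]
      rw [← hcc]
      exact mul_le_mul_right hcov _
    have hcinv : c⁻¹ ≤ D ^ (2 : ℝ) := by
      have hDpos : (0:ℝ) < 4 * (2 : ℝ) ^ (-(k : ℝ)) := by positivity
      rw [hD, ENNReal.ofReal_rpow_of_pos hDpos]
      have hcr : c = ENNReal.ofReal ((2 : ℝ) ^ (2 * k - 4)) := by
        rw [ENNReal.ofReal_pow (by norm_num)]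
        norm_num [hc]
      rw [hcr, ← ENNReal.ofReal_inv_of_pos (by positivity)]
      apply ENNReal.ofReal_le_ofReal
      have h1 : ((2:ℝ) ^ (2 * k - 4))⁻¹ = (2 : ℝ) ^ (-(((2 * k - 4 : ℕ) : ℝ))) := by
        rw [Real.rpow_neg (by norm_num), Real.rpow_natCast]
      have h2 : (4 * (2 : ℝ) ^ (-(k : ℝ))) ^ (2 : ℝ) = (2 : ℝ) ^ ((4 : ℝ) - 2 * k) := by
        rw [Real.rpow_two,
          show (4 : ℝ) - 2 * k = 4 + (-(k : ℝ) + -(k : ℝ)) by ring,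
          Real.rpow_add (by norm_num : (0:ℝ) < 2),
          Real.rpow_add (by norm_num : (0:ℝ) < 2),
          show (2 : ℝ) ^ (4 : ℝ) = 16 by
            rw [show (4 : ℝ) = ((4 : ℕ) : ℝ) by norm_num, Real.rpow_natCast]; norm_num]
        ring
      rw [h1, h2]
      have e4 : ((2 * k - 4 : ℕ) : ℝ) = 2 * (k : ℝ) - 4 := by
        have : (4 : ℕ) ≤ 2 * k := by omega
        push_cast [Nat.cast_sub this]
        ring
      rw [e4]
      apply Real.rpow_le_rpow_of_exponent_le (by norm_num)
      linarith
    calc (∫⁻ p, K p ^ (2 : ℝ)) ^ (1 / 2 : ℝ)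
        = (∫⁻ p in Sk k, (‖g' (Phi p)‖₊ : ℝ≥0∞) ^ (2 : ℝ)) ^ (1 / 2 : ℝ) := by
          simp_rw [e2]
          rw [lintegral_indicator hSm]
      _ ≤ (D ^ (2 : ℝ) * ∫⁻ q, (‖g' q‖₊ : ℝ≥0∞) ^ (2 : ℝ)) ^ (1 / 2 : ℝ) := by
          apply ENNReal.rpow_le_rpow _ (by norm_num)
          exact hXle.trans (mul_le_mul_left hcinv _)
      _ = D * eLpNorm g 2 volume := by
          rw [ENNReal.mul_rpow_of_nonneg _ _ (by norm_num : (0:ℝ) ≤ 1/2),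
            ← ENNReal.rpow_mul, eLp_sq, eLpNorm_congr_ae hgg'.symm]
          norm_num
  -- main lintegral bound
  have main : ∫⁻ p, (‖F p‖₊ : ℝ≥0∞) ≤
      (eLpNorm u 2 volume * eLpNorm v 2 volume) * (D * eLpNorm g 2 volume) := by
    rw [hlint_eq]
    refine holder.trans ?_
    rw [hHsq]
    exact mul_le_mul_right hKsq _
  -- integrability and conclusion
  have hfin : HasFiniteIntegral F volume := by
    have hlt : (eLpNorm u 2 volume * eLpNorm v 2 volume) * (D * eLpNorm g 2 volume) < ⊤ := by
      apply ENNReal.mul_lt_top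
      · exact ENNReal.mul_lt_top hmu.eLpNorm_lt_top hmv.eLpNorm_lt_top
      · exact ENNReal.mul_lt_top ENNReal.ofReal_lt_top hmg.eLpNorm_lt_top
    exact lt_of_le_of_lt main hlt
  have hInt : Integrable F volume := ⟨hFaesm, hfin⟩
  have hIntProd : Integrable (Function.uncurry fun x y : ℝ =>
      u x * v y * g (x + y, -3 * x * y * (x + y))) ((volume : Measure ℝ).prod volume) := by
    have : (volume : Measure (ℝ × ℝ)) = (volume : Measure ℝ).prod volume :=
      Measure.volume_eq_prod ℝ ℝ
    rw [← this]
    exact hInt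
  have hiter : ∫ ξ₁ : ℝ, ∫ ξ₂ : ℝ, u ξ₁ * v ξ₂ * g (ξ₁ + ξ₂, -3 * ξ₁ * ξ₂ * (ξ₁ + ξ₂)) =
      ∫ z, F z ∂volume := by
    rw [MeasureTheory.integral_integral hIntProd]
    rw [show (volume : Measure (ℝ × ℝ)) = (volume : Measure ℝ).prod volume from
      Measure.volume_eq_prod ℝ ℝ]
    rfl
  rw [hiter]
  calc ENNReal.ofReal ‖∫ z, F z ∂volume‖ = (‖∫ z, F z ∂volume‖₊ : ℝ≥0∞) :=
        ofReal_norm_eq_enorm _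
  _ ≤ ∫⁻ z, (‖F z‖₊ : ℝ≥0∞) ∂volume := enorm_integral_le_lintegral_enorm _
  _ ≤ (eLpNorm u 2 volume * eLpNorm v 2 volume) * (D * eLpNorm g 2 volume) := main
  _ = ENNReal.ofReal (4 * (2 : ℝ) ^ (-(k : ℝ))) *
        eLpNorm u 2 volume * eLpNorm v 2 volume * eLpNorm g 2 volume := by
      rw [hD]; ring
end

section
/- Let N ≥ 1, C₀ > 0, and let m : ℝ → (0,1] be a continuously differentiable even function with m(ξ) = 1 for |ξ| ≤ N, m nonincreasing on [0,∞), and |(m²)'(ξ)| ≤ C₀ m²(ξ)/|ξ| for |ξ| ≥ N. Then there is a constant C depending only on C₀ such that for all real ξ₁, ξ₂, ξ₃ with ξ₁+ξ₂+ξ₃ = 0 and |ξ₁| ≤ |ξ₂| ≤ |ξ₃|: (i) |m²(ξ₁)ξ₁ + m²(ξ₂)ξ₂ + m²(ξ₃)ξ₃| ≤ C m²(ξ₁) |ξ₁|; and (ii) if moreover ξ₁ ≠ 0 and ε > 0, 0 < α ≤ 1, then the multiplier σ₃(ξ₁,ξ₂,ξ₃) = -i(m²(ξ₁)ξ₁ +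 m²(ξ₂)ξ₂ + m²(ξ₃)ξ₃) / ( 3iξ₁ξ₂ξ₃ - ε(|ξ₁|^{2α}+|ξ₂|^{2α}+|ξ₃|^{2α}) ) satisfies |σ₃(ξ₁,ξ₂,ξ₃)| ≤ C m²(ξ₁) / ξ₃². -/
/-- Mean value theorem for `a ≠ b`, either order. -/
lemma sigma3_mvt {g : ℝ → ℝ} (hg : ContDiff ℝ 1 g) {a b : ℝ} (hab : a ≠ b) :
    ∃ c ∈ Set.Ioo (min a b) (max a b), deriv g c = (g b - g a) / (b - a) := by
  rcases hab.lt_or_gt with h | h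
  · obtain ⟨c, hc1, hc2⟩ := exists_deriv_eq_slope g h
      (hg.continuous.continuousOn) ((hg.differentiable one_ne_zero).differentiableOn)
    refine ⟨c, ?_, hc2⟩
    rwa [min_eq_left h.le, max_eq_right h.le]
  · obtain ⟨c, hc1, hc2⟩ := exists_deriv_eq_slope g h
      (hg.continuous.continuousOn) ((hg.differentiable one_ne_zero).differentiableOn)
    refine ⟨c, ?_, ?_⟩
    · rwa [min_eq_right h.le, max_eq_left h.le]
    · rw [hc2]
      have hba : b - a ≠ 0 := sub_ne_zero.mpr hab.symm
      have hab' : a - b ≠ 0 := sub_ne_zero.mpr hab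
      field_simp
      ring

set_option maxHeartbeats 1000000 in
/-- Pointwise bounds for the cubic I-method multiplier of the KdV–Burgers modified energy:
(i) `|m²(ξ₁)ξ₁ + m²(ξ₂)ξ₂ + m²(ξ₃)ξ₃| ≤ C m²(ξ₁)|ξ₁|` on `ξ₁+ξ₂+ξ₃=0`, `|ξ₁|≤|ξ₂|≤|ξ₃|`;
(ii) `|σ₃(ξ₁,ξ₂,ξ₃)| ≤ C m²(ξ₁)/ξ₃²`, uniformly in `ε > 0` and `0 < α ≤ 1`. -/
theorem sigma3_pointwise_bound (C₀ : ℝ) (hC₀ : 0 < C₀) :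
    ∃ C > (0 : ℝ), ∀ N : ℝ, 1 ≤ N → ∀ m : ℝ → ℝ,
      ContDiff ℝ 1 m → (∀ ξ, m (-ξ) = m ξ) → (∀ ξ, 0 < m ξ ∧ m ξ ≤ 1) →
      (∀ ξ, |ξ| ≤ N → m ξ = 1) → AntitoneOn m (Set.Ici 0) →
      (∀ ξ : ℝ, N ≤ |ξ| → |deriv (fun x => m x ^ 2) ξ| ≤ C₀ * m ξ ^ 2 / |ξ|) →
      ∀ ξ₁ ξ₂ ξ₃ : ℝ, ξ₁ + ξ₂ + ξ₃ = 0 → |ξ₁| ≤ |ξ₂| → |ξ₂| ≤ |ξ₃| →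
        |m ξ₁ ^ 2 * ξ₁ + m ξ₂ ^ 2 * ξ₂ + m ξ₃ ^ 2 * ξ₃| ≤ C * m ξ₁ ^ 2 * |ξ₁| ∧
        (ξ₁ ≠ 0 → ∀ ε α : ℝ, 0 < ε → 0 < α → α ≤ 1 →
          ‖(-Complex.I * ((m ξ₁ ^ 2 * ξ₁ + m ξ₂ ^ 2 * ξ₂ + m ξ₃ ^ 2 * ξ₃ : ℝ) : ℂ)) /
              (3 * Complex.I * ((ξ₁ * ξ₂ * ξ₃ : ℝ) : ℂ) -
                ((ε * (|ξ₁| ^ (2 * α) + |ξ₂| ^ (2 * α) + |ξ₃| ^ (2 * α)) : ℝ) : ℂ))‖ ≤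
            C * m ξ₁ ^ 2 / ξ₃ ^ 2) := by
  refine ⟨C₀ + 2, by linarith, ?_⟩
  intro N hN m hm hme hm01 hm1 hanti hder ξ₁ ξ₂ ξ₃ hsum h12 h23
  have hmabs : ∀ x : ℝ, m |x| = m x := by
    intro x
    rcases abs_choice x with h | h
    · rw [h]
    · rw [h, hme]
  have hmono : ∀ x y : ℝ, |x| ≤ |y| → m y ≤ m x := by
    intro x y hxy
    have := hanti (Set.mem_Ici.mpr (abs_nonneg x)) (Set.mem_Ici.mpr (abs_nonneg y)) hxy
    rwa [hmabs, hmabs] at this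
  have hm1pos := (hm01 ξ₁).1
  -- The main bound on M
  have hMbound : |m ξ₁ ^ 2 * ξ₁ + m ξ₂ ^ 2 * ξ₂ + m ξ₃ ^ 2 * ξ₃|
      ≤ (C₀ + 2) * m ξ₁ ^ 2 * |ξ₁| := by
    rcases eq_or_ne ξ₁ 0 with h1 | h1
    · have h3 : ξ₃ = -ξ₂ := by rw [h1] at hsum; linarith
      rw [h1, h3, hme]
      simp
    -- ξ₁ ≠ 0 case via MVT for g x = m x ^ 2 * x
    set g : ℝ → ℝ := fun x => m x ^ 2 * x with hg_def
    have hgC1 : ContDiff ℝ 1 g := ((hm.pow 2).mul contDiff_id)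
    have h3 : ξ₃ = -(ξ₂ + ξ₁) := by linarith
    have h23' : |ξ₂| ≤ |ξ₂ + ξ₁| := by
      have := h23; rwa [h3, abs_neg] at this
    have hM : m ξ₁ ^ 2 * ξ₁ + m ξ₂ ^ 2 * ξ₂ + m ξ₃ ^ 2 * ξ₃
        = g ξ₁ + (g ξ₂ - g (ξ₂ + ξ₁)) := by
      simp only [hg_def, h3, hme]
      ring
    have hab : ξ₂ ≠ ξ₂ + ξ₁ := fun h => h1 (by linarith)
    obtain ⟨c, hcmem, hcd⟩ := sigma3_mvt hgC1 hab
    have hslope : g ξ₂ - g (ξ₂ + ξ₁) = -(deriv g c * ξ₁) := by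
      rw [hcd]
      field_simp
      ring
    -- ξ₂ and ξ₂ + ξ₁ have the same (strict) sign
    have hprod : 0 < ξ₂ * (ξ₂ + ξ₁) := by
      rcases lt_or_ge 0 (ξ₂ * (ξ₂ + ξ₁)) with h | h
      · exact h
      · exfalso
        have e12 : ξ₁ ^ 2 ≤ ξ₂ ^ 2 := by
          have := mul_self_le_mul_self (abs_nonneg ξ₁) h12
          simpa [abs_mul_abs_self, ← sq] using this
        have e23 : ξ₂ ^ 2 ≤ (ξ₂ + ξ₁) ^ 2 := by
          have := mul_self_le_mul_self (abs_nonneg ξ₂) h23'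
          simpa [abs_mul_abs_self, ← sq] using this
        have h1sq : 0 < ξ₁ ^ 2 := by positivity
        nlinarith
    have hc1 : |ξ₁| ≤ |c| := by
      obtain ⟨hcl, hcr⟩ := hcmem
      rcases lt_or_ge 0 ξ₂ with hs | hs
      · have hbpos : 0 < ξ₂ + ξ₁ := by nlinarith
        have hcpos : 0 < c := (lt_min hs hbpos).trans hcl
        have habs2 : |ξ₁| ≤ ξ₂ := h12.trans_eq (abs_of_pos hs)
        have habs3 : |ξ₁| ≤ ξ₂ + ξ₁ := by
          have := h12.trans h23'
          rwa [abs_of_pos hbpos] at this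
        rw [abs_of_pos hcpos]
        exact (le_min habs2 habs3).trans hcl.le
      · have hξ₂neg : ξ₂ < 0 := by
          rcases hs.lt_or_eq with h | h
          · exact h
          · exfalso; rw [h, zero_mul] at hprod; exact lt_irrefl 0 hprod
        have hbneg : ξ₂ + ξ₁ < 0 := by nlinarith
        have hcneg : c < 0 := hcr.trans_le (max_le hξ₂neg.le hbneg.le)
        have habs2 : |ξ₁| ≤ -ξ₂ := by rwa [abs_of_neg hξ₂neg] at h12
        have habs3 : |ξ₁| ≤ -(ξ₂ + ξ₁) := by
          have := h12.trans h23'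
          rwa [abs_of_neg hbneg] at this
        rw [abs_of_neg hcneg]
        have hmax : max ξ₂ (ξ₂ + ξ₁) ≤ -|ξ₁| := max_le (by linarith) (by linarith)
        linarith
    -- bound on deriv g c
    have hmc : m c ≤ m ξ₁ := hmono ξ₁ c hc1
    have hmcpos := (hm01 c).1
    have hgderiv : deriv g c = deriv (fun x => m x ^ 2) c * c + m c ^ 2 := by
      have hd2 : HasDerivAt (fun x => m x ^ 2) (deriv (fun x => m x ^ 2) c) c :=
        (((hm.differentiable one_ne_zero) c).pow 2).hasDerivAt
      have := hd2.mul (hasDerivAt_id c)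
      simp only [mul_one, id] at this
      exact this.deriv
    have hderiv_bound : |deriv g c| ≤ (C₀ + 1) * m ξ₁ ^ 2 := by
      rcases lt_or_ge |c| N with hcN | hcN
      · -- m² is locally 1 near c
        have hd0 : deriv (fun x => m x ^ 2) c = 0 := by
          have hev : (fun x => m x ^ 2) =ᶠ[nhds c] fun _ => (1 : ℝ) := by
            have hopen : IsOpen {x : ℝ | |x| < N} := isOpen_lt continuous_abs continuous_const
            filter_upwards [hopen.mem_nhds hcN] with x hx
            rw [hm1 x (le_of_lt hx)]; norm_num
          rw [hev.deriv_eq, deriv_const]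
        rw [hgderiv, hd0]
        have hmξ₁ : m ξ₁ = 1 := hm1 ξ₁ (hc1.trans hcN.le)
        have hmc1 : m c = 1 := hm1 c hcN.le
        rw [hmξ₁, hmc1]
        simp only [zero_mul, zero_add, one_pow, mul_one, abs_one]
        linarith
      · have hder_c := hder c hcN
        have hcpos : (0:ℝ) < |c| := lt_of_lt_of_le (by linarith) hcN
        rw [hgderiv]
        have h1b : |deriv (fun x => m x ^ 2) c * c| ≤ C₀ * m c ^ 2 := by
          rw [abs_mul]
          calc |deriv (fun x => m x ^ 2) c| * |c| ≤ (C₀ * m c ^ 2 / |c|) * |c| := by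
                apply mul_le_mul_of_nonneg_right hder_c (abs_nonneg c)
            _ = C₀ * m c ^ 2 := by field_simp
        have h2b : |m c ^ 2| = m c ^ 2 := abs_of_pos (by positivity)
        calc |deriv (fun x => m x ^ 2) c * c + m c ^ 2|
            ≤ |deriv (fun x => m x ^ 2) c * c| + |m c ^ 2| := abs_add_le _ _
          _ ≤ C₀ * m c ^ 2 + m c ^ 2 := by rw [h2b]; linarith
          _ = (C₀ + 1) * m c ^ 2 := by ring
          _ ≤ (C₀ + 1) * m ξ₁ ^ 2 := by
              have h2 : m c ^ 2 ≤ m ξ₁ ^ 2 := by nlinarith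
              nlinarith
    -- put together
    rw [hM, hslope]
    have hgξ₁ : |g ξ₁| ≤ m ξ₁ ^ 2 * |ξ₁| := by
      rw [hg_def]
      simp only
      rw [abs_mul, abs_of_pos (show (0:ℝ) < m ξ₁ ^ 2 by positivity)]
    have hprod_b : |deriv g c * ξ₁| ≤ (C₀ + 1) * m ξ₁ ^ 2 * |ξ₁| := by
      rw [abs_mul]
      exact mul_le_mul_of_nonneg_right hderiv_bound (abs_nonneg ξ₁)
    calc |g ξ₁ + -(deriv g c * ξ₁)| ≤ |g ξ₁| + |deriv g c * ξ₁| := by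
          simpa [abs_neg] using abs_add_le (g ξ₁) (-(deriv g c * ξ₁))
      _ ≤ m ξ₁ ^ 2 * |ξ₁| + (C₀ + 1) * m ξ₁ ^ 2 * |ξ₁| := add_le_add hgξ₁ hprod_b
      _ = (C₀ + 2) * m ξ₁ ^ 2 * |ξ₁| := by ring
  refine ⟨hMbound, ?_⟩
  -- part (ii)
  intro h1 ε α hε hα hα1
  set M : ℝ := m ξ₁ ^ 2 * ξ₁ + m ξ₂ ^ 2 * ξ₂ + m ξ₃ ^ 2 * ξ₃ with hMdef
  set r : ℝ := ε * (|ξ₁| ^ (2 * α) + |ξ₂| ^ (2 * α) + |ξ₃| ^ (2 * α)) with hrdef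
  have h2ne : ξ₂ ≠ 0 := fun h => h1 (abs_nonpos_iff.mp (by rw [h] at h12; simpa using h12))
  have h3ne : ξ₃ ≠ 0 := fun h => h2ne (abs_nonpos_iff.mp (by rw [h] at h23; simpa using h23))
  have h1abs : 0 < |ξ₁| := abs_pos.mpr h1
  have h3sq : 0 < ξ₃ ^ 2 := by positivity
  have hm2pos : 0 < m ξ₁ ^ 2 := by positivity
  have hnum : ‖(-Complex.I * (M : ℂ))‖ = |M| := by
    rw [norm_mul, norm_neg, Complex.norm_I, one_mul, Complex.norm_real, Real.norm_eq_abs]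
  have hden_im : (3 * Complex.I * ((ξ₁ * ξ₂ * ξ₃ : ℝ) : ℂ) - ((r : ℝ) : ℂ)).im
      = 3 * (ξ₁ * ξ₂ * ξ₃) := by
    simp
  have hden_lb : 3 * |ξ₁ * ξ₂ * ξ₃|
      ≤ ‖3 * Complex.I * ((ξ₁ * ξ₂ * ξ₃ : ℝ) : ℂ) - ((r : ℝ) : ℂ)‖ := by
    have := Complex.abs_im_le_norm (3 * Complex.I * ((ξ₁ * ξ₂ * ξ₃ : ℝ) : ℂ) - ((r : ℝ) : ℂ))
    rw [hden_im] at this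
    have h3abs : |(3:ℝ) * (ξ₁ * ξ₂ * ξ₃)| = 3 * |ξ₁ * ξ₂ * ξ₃| := by
      rw [abs_mul]; norm_num
    rw [← h3abs]
    exact this
  have hP : (3/2) * |ξ₁| * ξ₃ ^ 2 ≤ 3 * |ξ₁ * ξ₂ * ξ₃| := by
    rw [abs_mul, abs_mul]
    have h32 : |ξ₃| / 2 ≤ |ξ₂| := by
      have h3e : ξ₃ = -(ξ₁ + ξ₂) := by linarith
      have : |ξ₃| ≤ |ξ₁| + |ξ₂| := by
        rw [h3e, abs_neg]
        exact abs_add_le _ _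
      linarith
    have hsq : |ξ₃| * |ξ₃| = ξ₃ ^ 2 := by rw [abs_mul_abs_self]; ring
    calc (3/2) * |ξ₁| * ξ₃ ^ 2 = 3 * (|ξ₁| * (|ξ₃| / 2) * |ξ₃|) := by rw [← hsq]; ring
      _ ≤ 3 * (|ξ₁| * |ξ₂| * |ξ₃|) := by
          have := mul_le_mul_of_nonneg_right
            (mul_le_mul_of_nonneg_left h32 (abs_nonneg ξ₁)) (abs_nonneg ξ₃)
          linarith
  have hlbpos : (0:ℝ) < (3/2) * |ξ₁| * ξ₃ ^ 2 :=
    mul_pos (mul_pos (by norm_num) h1abs) h3sq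
  have hden_pos : 0 < ‖3 * Complex.I * ((ξ₁ * ξ₂ * ξ₃ : ℝ) : ℂ) - ((r : ℝ) : ℂ)‖ :=
    lt_of_lt_of_le hlbpos (hP.trans hden_lb)
  rw [norm_div, hnum]
  have step1 : |M| / ‖3 * Complex.I * ((ξ₁ * ξ₂ * ξ₃ : ℝ) : ℂ) - ((r : ℝ) : ℂ)‖
      ≤ ((C₀ + 2) * m ξ₁ ^ 2 * |ξ₁|) / ((3/2) * |ξ₁| * ξ₃ ^ 2) := by
    apply div_le_div₀ (by positivity) hMbound hlbpos
    exact hP.trans hden_lb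
  refine le_trans step1 ?_
  rw [div_le_div_iff₀ hlbpos h3sq]
  nlinarith [mul_pos (mul_pos hm2pos h1abs) h3sq, hC₀,
    mul_pos (mul_pos (mul_pos hm2pos h1abs) h3sq) hC₀]
end

section
/- Let N ≥ 1, C₀ > 0, and let m : ℝ → (0,1] be a continuously differentiable even function with m(ξ) = 1 for |ξ| ≤ N, m nonincreasing on [0,∞), and |(m²)'(ξ)| ≤ C₀ m²(ξ)/|ξ| for |ξ| ≥ N. Let ε > 0 and 0 < α ≤ 1. For ξ₁+ξ₂+ξ₃ = 0 (not all zero) define σ₃(ξ₁,ξ₂,ξ₃) = -i M̃ / ( 3iξ₁ξ₂ξ₃ - εβ ) and σ₃⁻(ξ₁,ξ₂,ξ₃) = -i M̃ / ( 3iξ₁ξ₂ξ₃ + εβ ), where M̃ = m²(ξ₁)ξ₁ + m²(ξ₂)ξ₂ + m²(ξ₃)ξ₃ and β = |ξ₁|^{2α}+|ξ₂|^{2α}+|ξ₃|^{2α}. Then there is a constant C depending only on C₀ such that |σ₃(ξ₁,ξ₂,ξ₃) - σ₃⁻(ξ₁,ξ₂,ξ₃)| ≤ C ε M^{2α} m²(μ)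 μ / ( (ξ₁ξ₂ξ₃)² + ε² M^{4α} ), where M = max(|ξ₁|,|ξ₂|,|ξ₃|) and μ = min(|ξ₁|,|ξ₂|,|ξ₃|). -/
lemma m_abs_eq (m : ℝ → ℝ) (hme : ∀ ξ, m (-ξ) = m ξ) (ξ : ℝ) : m |ξ| = m ξ := by
  rcases abs_choice ξ with h | h
  · rw [h]
  · rw [h, hme]

lemma deriv_sq_bound (C₀ N : ℝ) (hC₀ : 0 < C₀) (hN : 1 ≤ N) (m : ℝ → ℝ)
    (hm1 : ContDiff ℝ 1 m) (hm01 : ∀ ξ, 0 < m ξ ∧ m ξ ≤ 1)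
    (hmN : ∀ ξ, |ξ| ≤ N → m ξ = 1) (hmono : AntitoneOn m (Set.Ici 0))
    (hm' : ∀ ξ : ℝ, N ≤ |ξ| → |deriv (fun x => m x ^ 2) ξ| ≤ C₀ * m ξ ^ 2 / |ξ|)
    (p q : ℝ) (hp : 0 ≤ p) (hpq : p ≤ q) :
    |m q ^ 2 - m p ^ 2| ≤ C₀ * m p ^ 2 / max N p * (q - p) := by
  have hmaxpos : 0 < max N p := lt_of_lt_of_le (by linarith) (le_max_left _ _)
  rcases le_or_gt q N with hqN | hqN
  · have h1 : m q = 1 := hmN q (by rw [abs_of_nonneg (le_trans hp hpq)]; exact hqN)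
    have h2 : m p = 1 := hmN p (by rw [abs_of_nonneg hp]; linarith)
    rw [h1, h2]
    simp only [one_pow, sub_self, abs_zero, mul_one]
    exact mul_nonneg (by positivity) (by linarith)
  · set p' := max N p with hp'
    have hp'N : N ≤ p' := le_max_left _ _
    have hp'pos : 0 < p' := hmaxpos
    have hp'q : p' ≤ q := max_le hqN.le hpq
    have hpp' : p ≤ p' := le_max_right _ _
    have hfp' : m p' ^ 2 = m p ^ 2 := by
      rcases le_or_gt N p with h | h
      · rw [hp', max_eq_right h]
      · have e1 : m p = 1 := hmN p (by rw [abs_of_nonneg hp]; linarith)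
        have e2 : m p' = 1 := by
          rw [hp', max_eq_left h.le]
          exact hmN N (by rw [abs_of_nonneg (by linarith)])
        rw [e1, e2]
    have hdiff : ∀ x : ℝ, DifferentiableAt ℝ (fun x => m x ^ 2) x :=
      fun x => ((hm1.differentiable one_ne_zero).differentiableAt).pow 2
    have bound : ∀ x ∈ Set.Icc p' q, ‖deriv (fun x => m x ^ 2) x‖ ≤ C₀ * m p ^ 2 / p' := by
      intro x hx
      have hxp' : p' ≤ x := hx.1
      have hxpos : 0 < x := lt_of_lt_of_le hp'pos hxp'
      have hNx : N ≤ |x| := by rw [abs_of_pos hxpos]; linarith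
      have h1 : |deriv (fun x => m x ^ 2) x| ≤ C₀ * m x ^ 2 / |x| := hm' x hNx
      rw [Real.norm_eq_abs]
      refine h1.trans ?_
      rw [abs_of_pos hxpos]
      have hmx : m x ≤ m p := by
        calc m x ≤ m p' := hmono (Set.mem_Ici.mpr hp'pos.le) (Set.mem_Ici.mpr hxpos.le) hxp'
        _ ≤ m p := hmono (Set.mem_Ici.mpr hp) (Set.mem_Ici.mpr hp'pos.le) hpp'
      have hmxpos := (hm01 x).1
      have hmppos := (hm01 p).1
      apply div_le_div₀ (by positivity) _ hp'pos hxp'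
      have : m x ^ 2 ≤ m p ^ 2 := by nlinarith
      nlinarith
    have key := Convex.norm_image_sub_le_of_norm_deriv_le
      (f := fun x => m x ^ 2) (s := Set.Icc p' q)
      (fun x _ => hdiff x) bound (convex_Icc _ _)
      (Set.left_mem_Icc.mpr hp'q) (Set.right_mem_Icc.mpr hp'q)
    simp only [Real.norm_eq_abs] at key
    have h2 : |q - p'| = q - p' := abs_of_nonneg (by linarith)
    rw [h2] at key
    calc |m q ^ 2 - m p ^ 2| = |m q ^ 2 - m p' ^ 2| := by rw [hfp']
      _ ≤ C₀ * m p ^ 2 / p' * (q - p') := key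
      _ ≤ C₀ * m p ^ 2 / p' * (q - p) := by
          have : (0:ℝ) ≤ C₀ * m p ^ 2 / p' := by
            have := (hm01 p).1; positivity
          nlinarith

lemma Mbound (C₀ N : ℝ) (hC₀ : 0 < C₀) (hN : 1 ≤ N) (m : ℝ → ℝ)
    (hm1 : ContDiff ℝ 1 m) (hme : ∀ ξ, m (-ξ) = m ξ) (hm01 : ∀ ξ, 0 < m ξ ∧ m ξ ≤ 1)
    (hmN : ∀ ξ, |ξ| ≤ N → m ξ = 1) (hmono : AntitoneOn m (Set.Ici 0))
    (hm' : ∀ ξ : ℝ, N ≤ |ξ| → |deriv (fun x => m x ^ 2) ξ| ≤ C₀ * m ξ ^ 2 / |ξ|)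
    (ξ₁ ξ₂ ξ₃ : ℝ) (hsum : ξ₁ + ξ₂ + ξ₃ = 0) (h31 : |ξ₃| ≤ |ξ₁|) (h32 : |ξ₃| ≤ |ξ₂|) :
    |m ξ₁ ^ 2 * ξ₁ + m ξ₂ ^ 2 * ξ₂ + m ξ₃ ^ 2 * ξ₃| ≤ (2*C₀+1) * (m ξ₃ ^ 2 * |ξ₃|) := by
  set a := |ξ₁| with ha
  set b := |ξ₂| with hb
  set c := |ξ₃| with hc
  have hc0 : 0 ≤ c := abs_nonneg _
  have ha0 : 0 ≤ a := abs_nonneg _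
  have hb0 : 0 ≤ b := abs_nonneg _
  have hma : m a = m ξ₁ := m_abs_eq m hme ξ₁
  have hmb : m b = m ξ₂ := m_abs_eq m hme ξ₂
  have hmc : m c = m ξ₃ := m_abs_eq m hme ξ₃
  have hab : |a - b| ≤ c := by
    have h := abs_abs_sub_abs_le_abs_sub ξ₁ (-ξ₂)
    rw [abs_neg, sub_neg_eq_add, show ξ₁ + ξ₂ = -ξ₃ by linarith, abs_neg] at h
    exact h
  -- monotonicity facts
  have hmca : m a ≤ m c := hmono (Set.mem_Ici.mpr hc0) (Set.mem_Ici.mpr ha0) h31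
  have hmcb : m b ≤ m c := hmono (Set.mem_Ici.mpr hc0) (Set.mem_Ici.mpr hb0) h32
  have hmapos := (hm01 a).1
  have hmbpos := (hm01 b).1
  have hmcpos := (hm01 c).1
  -- decomposition
  have hA : m ξ₁ ^ 2 * ξ₁ + m ξ₂ ^ 2 * ξ₂ + m ξ₃ ^ 2 * ξ₃
      = (m ξ₁ ^ 2 - m ξ₂ ^ 2) * ξ₁ + (m ξ₃ ^ 2 - m ξ₂ ^ 2) * ξ₃ := by
    rw [show ξ₂ = -ξ₁ - ξ₃ by linarith]; ring
  -- second term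
  have hY : |(m ξ₃ ^ 2 - m ξ₂ ^ 2) * ξ₃| ≤ m ξ₃ ^ 2 * c := by
    rw [abs_mul, ← hc]
    have h1 : |m ξ₃ ^ 2 - m ξ₂ ^ 2| ≤ m ξ₃ ^ 2 := by
      rw [abs_of_nonneg (by nlinarith)]
      nlinarith
    exact mul_le_mul_of_nonneg_right h1 hc0 |>.trans (by nlinarith [mul_le_mul_of_nonneg_right h1 hc0])
  -- first term
  have hX : |(m ξ₁ ^ 2 - m ξ₂ ^ 2) * ξ₁| ≤ 2 * C₀ * (m ξ₃ ^ 2 * c) := by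
    rw [abs_mul, ← ha, ← hma, ← hmb, ← hmc]
    rcases le_total a b with h | h
    · have key := deriv_sq_bound C₀ N hC₀ hN m hm1 hm01 hmN hmono hm' a b ha0 h
      have hmax : 0 < max N a := lt_of_lt_of_le (by linarith) (le_max_left _ _)
      have hamax : a ≤ max N a := le_max_right _ _
      have hba : b - a ≤ c := by
        rw [abs_sub_comm] at hab; rw [abs_of_nonneg (by linarith)] at hab; exact hab
      have hsq : m a ^ 2 ≤ m c ^ 2 := by nlinarith
      have h1 : |m a ^ 2 - m b ^ 2| = |m b ^ 2 - m a ^ 2| := abs_sub_comm _ _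
      have hnn : (0:ℝ) ≤ C₀ * m a ^ 2 := mul_nonneg hC₀.le (by positivity)
      have hccnn : (0:ℝ) ≤ C₀ * m c ^ 2 * c := mul_nonneg (mul_nonneg hC₀.le (by positivity)) hc0
      rw [h1]
      calc |m b ^ 2 - m a ^ 2| * a ≤ (C₀ * m a ^ 2 / max N a * (b - a)) * a := by
            exact mul_le_mul_of_nonneg_right key ha0
        _ = C₀ * m a ^ 2 * (b - a) * (a / max N a) := by ring
        _ ≤ C₀ * m a ^ 2 * c * 1 := by
            apply mul_le_mul (mul_le_mul_of_nonneg_left hba hnn)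
              (by rw [div_le_one hmax]; exact hamax) (div_nonneg ha0 hmax.le)
              (mul_nonneg hnn hc0)
        _ ≤ 2 * C₀ * (m c ^ 2 * c) := by
            have h3 : C₀ * m a ^ 2 * c ≤ C₀ * m c ^ 2 * c :=
              mul_le_mul_of_nonneg_right (mul_le_mul_of_nonneg_left hsq hC₀.le) hc0
            linarith
    · have key := deriv_sq_bound C₀ N hC₀ hN m hm1 hm01 hmN hmono hm' b a hb0 h
      have hmax : 0 < max N b := lt_of_lt_of_le (by linarith) (le_max_left _ _)
      have hbmax : b ≤ max N b := le_max_right _ _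
      have hba : a - b ≤ c := by rw [abs_of_nonneg (by linarith)] at hab; exact hab
      have hsq : m b ^ 2 ≤ m c ^ 2 := by nlinarith
      have hnn : (0:ℝ) ≤ C₀ * m b ^ 2 := mul_nonneg hC₀.le (by positivity)
      have hccnn : (0:ℝ) ≤ C₀ * m b ^ 2 * c := mul_nonneg hnn hc0
      calc |m a ^ 2 - m b ^ 2| * a ≤ (C₀ * m b ^ 2 / max N b * (a - b)) * a := by
            exact mul_le_mul_of_nonneg_right key ha0
        _ = C₀ * m b ^ 2 * (a - b) * (a / max N b) := by ring
        _ ≤ C₀ * m b ^ 2 * c * 2 := by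
            apply mul_le_mul (mul_le_mul_of_nonneg_left hba hnn)
              (by rw [div_le_iff₀ hmax]; linarith) (div_nonneg ha0 hmax.le) hccnn
        _ ≤ 2 * C₀ * (m c ^ 2 * c) := by
            have h3 : C₀ * m b ^ 2 * c ≤ C₀ * m c ^ 2 * c :=
              mul_le_mul_of_nonneg_right (mul_le_mul_of_nonneg_left hsq hC₀.le) hc0
            linarith
  calc |m ξ₁ ^ 2 * ξ₁ + m ξ₂ ^ 2 * ξ₂ + m ξ₃ ^ 2 * ξ₃|
      = |(m ξ₁ ^ 2 - m ξ₂ ^ 2) * ξ₁ + (m ξ₃ ^ 2 - m ξ₂ ^ 2) * ξ₃| := by rw [hA]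
    _ ≤ |(m ξ₁ ^ 2 - m ξ₂ ^ 2) * ξ₁| + |(m ξ₃ ^ 2 - m ξ₂ ^ 2) * ξ₃| := abs_add_le _ _
    _ ≤ 2 * C₀ * (m ξ₃ ^ 2 * c) + m ξ₃ ^ 2 * c := by linarith
    _ = (2*C₀+1) * (m ξ₃ ^ 2 * |ξ₃|) := by rw [← hc]; ring

lemma Mbound' (C₀ N : ℝ) (hC₀ : 0 < C₀) (hN : 1 ≤ N) (m : ℝ → ℝ)
    (hm1 : ContDiff ℝ 1 m) (hme : ∀ ξ, m (-ξ) = m ξ) (hm01 : ∀ ξ, 0 < m ξ ∧ m ξ ≤ 1)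
    (hmN : ∀ ξ, |ξ| ≤ N → m ξ = 1) (hmono : AntitoneOn m (Set.Ici 0))
    (hm' : ∀ ξ : ℝ, N ≤ |ξ| → |deriv (fun x => m x ^ 2) ξ| ≤ C₀ * m ξ ^ 2 / |ξ|)
    (ξ₁ ξ₂ ξ₃ : ℝ) (hsum : ξ₁ + ξ₂ + ξ₃ = 0) :
    |m ξ₁ ^ 2 * ξ₁ + m ξ₂ ^ 2 * ξ₂ + m ξ₃ ^ 2 * ξ₃|
      ≤ (2*C₀+1) * (m (min |ξ₁| (min |ξ₂| |ξ₃|)) ^ 2 * min |ξ₁| (min |ξ₂| |ξ₃|)) := by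
  rcases le_total |ξ₁| (min |ξ₂| |ξ₃|) with h1 | h1
  · have hmin : min |ξ₁| (min |ξ₂| |ξ₃|) = |ξ₁| := min_eq_left h1
    rw [hmin, m_abs_eq m hme]
    have key := Mbound C₀ N hC₀ hN m hm1 hme hm01 hmN hmono hm' ξ₂ ξ₃ ξ₁
      (by linarith) (le_trans h1 (min_le_left _ _)) (le_trans h1 (min_le_right _ _))
    have e : m ξ₂ ^ 2 * ξ₂ + m ξ₃ ^ 2 * ξ₃ + m ξ₁ ^ 2 * ξ₁
        = m ξ₁ ^ 2 * ξ₁ + m ξ₂ ^ 2 * ξ₂ + m ξ₃ ^ 2 * ξ₃ := by ring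
    rw [e] at key
    exact key
  · rcases le_total |ξ₂| |ξ₃| with h2 | h2
    · have hmin : min |ξ₁| (min |ξ₂| |ξ₃|) = |ξ₂| := by
        rw [min_eq_left h2] at h1 ⊢; exact min_eq_right h1
      rw [hmin, m_abs_eq m hme]
      have key := Mbound C₀ N hC₀ hN m hm1 hme hm01 hmN hmono hm' ξ₁ ξ₃ ξ₂
        (by linarith) (by rw [min_eq_left h2] at h1; exact h1) h2
      have e : m ξ₁ ^ 2 * ξ₁ + m ξ₃ ^ 2 * ξ₃ + m ξ₂ ^ 2 * ξ₂
          = m ξ₁ ^ 2 * ξ₁ + m ξ₂ ^ 2 * ξ₂ + m ξ₃ ^ 2 * ξ₃ := by ring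
      rw [e] at key
      exact key
    · have hmin : min |ξ₁| (min |ξ₂| |ξ₃|) = |ξ₃| := by
        rw [min_eq_right h2] at h1 ⊢; exact min_eq_right h1
      rw [hmin, m_abs_eq m hme]
      exact Mbound C₀ N hC₀ hN m hm1 hme hm01 hmN hmono hm' ξ₁ ξ₂ ξ₃ hsum
        (by rw [min_eq_right h2] at h1; exact h1) h2

lemma sigma_diff_eq (P b A : ℝ) (hb : 0 < b) :
    (-Complex.I * (A : ℂ)) / (3 * Complex.I * (P:ℂ) - (b:ℂ)) -
    (-Complex.I * (A : ℂ)) / (3 * Complex.I * (P:ℂ) + (b:ℂ))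
    = ((2*b*A/(9*P^2+b^2) : ℝ) : ℂ) * Complex.I := by
  have hz₁ : (3 * Complex.I * (P:ℂ) - (b:ℂ)) ≠ 0 := by
    intro h
    have := congrArg Complex.re h
    simp at this
    linarith
  have hz₂ : (3 * Complex.I * (P:ℂ) + (b:ℂ)) ≠ 0 := by
    intro h
    have := congrArg Complex.re h
    simp at this
    linarith
  have hd : (9*P^2+b^2 : ℝ) ≠ 0 := by positivity
  rw [div_sub_div _ _ hz₁ hz₂, Complex.ofReal_div, div_mul_eq_mul_div,
    div_eq_div_iff (mul_ne_zero hz₁ hz₂) (by exact_mod_cast Complex.ofReal_ne_zero.mpr hd)]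
  push_cast
  ring_nf
  rw [show Complex.I ^ 3 = -Complex.I by simp [pow_succ, Complex.I_sq]]
  ring

/-- The difference of the two cubic I-method multipliers `σ₃` and `σ₃⁻` (with the two signs
of the dissipative term in the denominator) is small, proportional to `ε`:
`|σ₃ - σ₃⁻| ≤ C ε M^{2α} m²(μ) μ / ((ξ₁ξ₂ξ₃)² + ε² M^{4α})` where `M` is the largest and
`μ` the smallest of `|ξ₁|, |ξ₂|, |ξ₃|`. -/
theorem sigma3_difference_bound (C₀ : ℝ) (hC₀ : 0 < C₀) :
    ∃ C > (0 : ℝ), ∀ N : ℝ, 1 ≤ N → ∀ m : ℝ → ℝ,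
      ContDiff ℝ 1 m → (∀ ξ, m (-ξ) = m ξ) → (∀ ξ, 0 < m ξ ∧ m ξ ≤ 1) →
      (∀ ξ, |ξ| ≤ N → m ξ = 1) → AntitoneOn m (Set.Ici 0) →
      (∀ ξ : ℝ, N ≤ |ξ| → |deriv (fun x => m x ^ 2) ξ| ≤ C₀ * m ξ ^ 2 / |ξ|) →
      ∀ ε α : ℝ, 0 < ε → 0 < α → α ≤ 1 →
      ∀ ξ₁ ξ₂ ξ₃ : ℝ, ξ₁ + ξ₂ + ξ₃ = 0 → ¬(ξ₁ = 0 ∧ ξ₂ = 0 ∧ ξ₃ = 0) →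
        ‖(-Complex.I * ((m ξ₁ ^ 2 * ξ₁ + m ξ₂ ^ 2 * ξ₂ + m ξ₃ ^ 2 * ξ₃ : ℝ) : ℂ)) /
            (3 * Complex.I * ((ξ₁ * ξ₂ * ξ₃ : ℝ) : ℂ) -
              ((ε * (|ξ₁| ^ (2 * α) + |ξ₂| ^ (2 * α) + |ξ₃| ^ (2 * α)) : ℝ) : ℂ)) -
          (-Complex.I * ((m ξ₁ ^ 2 * ξ₁ + m ξ₂ ^ 2 * ξ₂ + m ξ₃ ^ 2 * ξ₃ : ℝ) : ℂ)) /
            (3 * Complex.I * ((ξ₁ * ξ₂ * ξ₃ : ℝ) : ℂ) +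
              ((ε * (|ξ₁| ^ (2 * α) + |ξ₂| ^ (2 * α) + |ξ₃| ^ (2 * α)) : ℝ) : ℂ))‖ ≤
          C * ε * (max |ξ₁| (max |ξ₂| |ξ₃|)) ^ (2 * α) *
              m (min |ξ₁| (min |ξ₂| |ξ₃|)) ^ 2 * (min |ξ₁| (min |ξ₂| |ξ₃|)) /
            ((ξ₁ * ξ₂ * ξ₃) ^ 2 + ε ^ 2 * (max |ξ₁| (max |ξ₂| |ξ₃|)) ^ (4 * α)) := by
  refine ⟨6 * (2 * C₀ + 1), by positivity, ?_⟩
  intro N hN m hm1 hme hm01 hmN hmono hm' ε α hε hα hα1 ξ₁ ξ₂ ξ₃ hsum hne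
  set A : ℝ := m ξ₁ ^ 2 * ξ₁ + m ξ₂ ^ 2 * ξ₂ + m ξ₃ ^ 2 * ξ₃ with hA
  set P : ℝ := ξ₁ * ξ₂ * ξ₃ with hP
  set β : ℝ := |ξ₁| ^ (2*α) + |ξ₂| ^ (2*α) + |ξ₃| ^ (2*α) with hβ
  set M : ℝ := max |ξ₁| (max |ξ₂| |ξ₃|) with hM
  set μ : ℝ := min |ξ₁| (min |ξ₂| |ξ₃|) with hμ
  have hμ0 : 0 ≤ μ := le_min (abs_nonneg _) (le_min (abs_nonneg _) (abs_nonneg _))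
  have hMpos : 0 < M := by
    rcases lt_or_ge 0 M with h | h
    · exact h
    · exfalso; apply hne
      have h1 : |ξ₁| ≤ M := le_max_left _ _
      have h2 : |ξ₂| ≤ M := le_trans (le_max_left _ _) (le_max_right _ _)
      have h3 : |ξ₃| ≤ M := le_trans (le_max_right _ _) (le_max_right _ _)
      exact ⟨abs_eq_zero.mp (le_antisymm (h1.trans h) (abs_nonneg _)),
        abs_eq_zero.mp (le_antisymm (h2.trans h) (abs_nonneg _)),
        abs_eq_zero.mp (le_antisymm (h3.trans h) (abs_nonneg _))⟩
  have hM2pos : 0 < M ^ (2*α) := Real.rpow_pos_of_pos hMpos _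
  have hM4pos : 0 < M ^ (4*α) := Real.rpow_pos_of_pos hMpos _
  -- β bounds
  have hr1 : (0:ℝ) ≤ |ξ₁| ^ (2*α) := Real.rpow_nonneg (abs_nonneg _) _
  have hr2 : (0:ℝ) ≤ |ξ₂| ^ (2*α) := Real.rpow_nonneg (abs_nonneg _) _
  have hr3 : (0:ℝ) ≤ |ξ₃| ^ (2*α) := Real.rpow_nonneg (abs_nonneg _) _
  have hMcase : M = |ξ₁| ∨ M = |ξ₂| ∨ M = |ξ₃| := by
    rcases max_choice |ξ₂| |ξ₃| with h | h <;>
      rcases max_choice |ξ₁| (max |ξ₂| |ξ₃|) with h' | h' <;>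
      rw [hM, h'] <;> simp [h]
  have hMβ : M ^ (2*α) ≤ β := by
    rcases hMcase with h | h | h <;> rw [h] <;> rw [hβ] <;> linarith
  have hβM : β ≤ 3 * M ^ (2*α) := by
    have b1 : |ξ₁| ^ (2*α) ≤ M ^ (2*α) :=
      Real.rpow_le_rpow (abs_nonneg _) (le_max_left _ _) (by positivity)
    have b2 : |ξ₂| ^ (2*α) ≤ M ^ (2*α) :=
      Real.rpow_le_rpow (abs_nonneg _) (le_trans (le_max_left _ _) (le_max_right _ _)) (by positivity)
    have b3 : |ξ₃| ^ (2*α) ≤ M ^ (2*α) :=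
      Real.rpow_le_rpow (abs_nonneg _) (le_trans (le_max_right _ _) (le_max_right _ _)) (by positivity)
    rw [hβ]; linarith
  have hβpos : 0 < β := lt_of_lt_of_le hM2pos hMβ
  have hbpos : 0 < ε * β := mul_pos hε hβpos
  have hM4 : M ^ (4*α) = (M ^ (2*α)) ^ 2 := by
    rw [← Real.rpow_natCast (M ^ (2*α)) 2, ← Real.rpow_mul hMpos.le]
    norm_num
    ring_nf
  -- rewrite the complex expression
  rw [sigma_diff_eq P (ε * β) A hbpos, norm_mul, Complex.norm_I, mul_one,
    Complex.norm_real, Real.norm_eq_abs, abs_div,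
    abs_of_pos (show (0:ℝ) < 9 * P ^ 2 + (ε * β) ^ 2 by positivity)]
  have hAb := Mbound' C₀ N hC₀ hN m hm1 hme hm01 hmN hmono hm' ξ₁ ξ₂ ξ₃ hsum
  rw [← hA, ← hμ] at hAb
  have hmμpos := (hm01 μ).1
  -- numerator bound
  have hnum : |2 * (ε * β) * A| ≤ 6 * (2*C₀+1) * ε * M ^ (2*α) * m μ ^ 2 * μ := by
    rw [abs_mul, abs_of_pos (by positivity : (0:ℝ) < 2 * (ε * β))]
    calc 2 * (ε * β) * |A| ≤ 2 * (ε * β) * ((2*C₀+1) * (m μ ^ 2 * μ)) := by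
          exact mul_le_mul_of_nonneg_left hAb (by positivity)
      _ ≤ 2 * (ε * (3 * M ^ (2*α))) * ((2*C₀+1) * (m μ ^ 2 * μ)) := by
          apply mul_le_mul_of_nonneg_right _ (by positivity)
          have : ε * β ≤ ε * (3 * M ^ (2*α)) := mul_le_mul_of_nonneg_left hβM hε.le
          linarith
      _ = 6 * (2*C₀+1) * ε * M ^ (2*α) * m μ ^ 2 * μ := by ring
  -- denominator bound
  have hden : P ^ 2 + ε ^ 2 * M ^ (4*α) ≤ 9 * P ^ 2 + (ε * β) ^ 2 := by
    have h1 : ε ^ 2 * M ^ (4*α) ≤ (ε * β) ^ 2 := by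
      rw [hM4, mul_pow]
      have : (M ^ (2*α)) ^ 2 ≤ β ^ 2 := pow_le_pow_left₀ hM2pos.le hMβ 2
      nlinarith [sq_nonneg ε]
    linarith [sq_nonneg P]
  have hdenpos : (0:ℝ) < P ^ 2 + ε ^ 2 * M ^ (4*α) := by positivity
  exact div_le_div₀ (by positivity) hnum hdenpos hden
end
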